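/- arXiv:1406.4075 — 3 statements merged into one kernel-verified Lean document; each statement's English description precedes it below -/
import Mathlib

section
/- Every regular interval exchange transformation is minimal. -/
open Set MeasureTheory

noncomputable section

/-- Left endpoint `γ i` of the `i`-th exchanged semi-interval. -/
def sepPt {s : ℕ} (l : ℝ) (len : Fin s → ℝ) (i : Fin s) : ℝ :=
  l + ∑ j ∈ Finset.univ.filter (fun j => j < i), len j

/-- Left endpoint `δ` of the image of the `i`-th exchanged semi-interval. -/
def imgPt {s : ℕ} (l : ℝ) (len : Fin s → ℝ) (π : Equiv.Perm (Fin s)) (i : Fin s) : ℝ :=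
  l + ∑ j ∈ Finset.univ.filter (fun j => π j < π i), len j

/-- `T` is the `s`-interval exchange transformation on `[l,r)` with lengths `len`
and permutation `π`, extended by the identity outside `[l,r)`. -/
def IsIET (s : ℕ) (l r : ℝ) (len : Fin s → ℝ) (π : Equiv.Perm (Fin s))
    (T : Equiv.Perm ℝ) : Prop :=
  l < r ∧ (∀ i, 0 < len i) ∧ (∑ i, len i) = r - l ∧
  (∀ z, z ∉ Set.Ico l r → T z = z) ∧
  ∀ i : Fin s, ∀ z ∈ Set.Ico (sepPt l len i) (sepPt l len i + len i),
    T z = z + (imgPt l len π i - sepPt l len i)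

/-- The two-sided orbit `{T^n z : n ∈ ℤ}`. -/
def orbitZ (T : Equiv.Perm ℝ) (z : ℝ) : Set ℝ := {w | ∃ n : ℤ, (T ^ n) z = w}

/-- Regularity (idoc): the orbits of the nonzero separation points are infinite
and pairwise disjoint. -/
def IsRegularIET (s : ℕ) (l : ℝ) (len : Fin s → ℝ) (T : Equiv.Perm ℝ) : Prop :=
  (∀ i : Fin s, (i : ℕ) ≠ 0 → (orbitZ T (sepPt l len i)).Infinite) ∧
  (∀ i j : Fin s, (i : ℕ) ≠ 0 → (j : ℕ) ≠ 0 → i ≠ j →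
    Disjoint (orbitZ T (sepPt l len i)) (orbitZ T (sepPt l len j)))

/-- Minimality: every (two-sided) orbit of a point of `[l,r)` is dense in `[l,r)`. -/
def IsMinimalOn (T : Equiv.Perm ℝ) (l r : ℝ) : Prop :=
  ∀ z ∈ Set.Ico l r, Set.Ico l r ⊆ closure (orbitZ T z)

/-- First return time of `z` in `I` (defined via `sInf`; meaningful when `T` is minimal). -/
def returnTime (T : Equiv.Perm ℝ) (I : Set ℝ) (z : ℝ) : ℕ :=
  sInf {n : ℕ | 0 < n ∧ (T ^ n) z ∈ I}

/-- The transformation induced by `T` on `I` (first-return map). -/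
def inducedMap (T : Equiv.Perm ℝ) (I : Set ℝ) (z : ℝ) : ℝ :=
  (T ^ returnTime T I z) z

/-- The transformation induced by `T` on `[u,v)` is an interval exchange
transformation on `k` intervals with data `(lam, σ)`. -/
def InducedData (T : Equiv.Perm ℝ) (u v : ℝ) (k : ℕ) (lam : Fin k → ℝ)
    (σ : Equiv.Perm (Fin k)) : Prop :=
  ∃ S : Equiv.Perm ℝ, IsIET k u v lam σ S ∧
    ∀ z ∈ Set.Ico u v, S z = inducedMap T (Set.Ico u v) z

/-- The semi-interval `[l,t)` is right admissible for `T`. -/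
def RightAdmissible (s : ℕ) (l r : ℝ) (len : Fin s → ℝ) (T : Equiv.Perm ℝ)
    (t : ℝ) : Prop :=
  l < t ∧ t < r ∧ ∃ (i : Fin s) (k : ℤ), t = (T ^ k) (sepPt l len i) ∧
    (0 < k → ∀ h : ℤ, 0 < h → h < k → t < (T ^ h) (sepPt l len i)) ∧
    (k ≤ 0 → ∀ h : ℤ, k < h → h ≤ 0 → t < (T ^ h) (sepPt l len i))

/-- `ρ⁺_{I,T}(z) = min {n > 0 : T^n z ∈ (u,v)}`. -/
def rhoPlusPt (T : Equiv.Perm ℝ) (u v z : ℝ) : ℕ :=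
  sInf {n : ℕ | 0 < n ∧ (T ^ n) z ∈ Set.Ioo u v}

/-- `ρ⁻_{I,T}(z) = min {n ≥ 0 : T^{-n} z ∈ (u,v)}`. -/
def rhoMinusPt (T : Equiv.Perm ℝ) (u v z : ℝ) : ℕ :=
  sInf {n : ℕ | (T⁻¹ ^ n) z ∈ Set.Ioo u v}

/-- The set of neighbours `N_{I,T}(z)` of `z` with respect to `I = [u,v)` and `T`. -/
def neighbours (T : Equiv.Perm ℝ) (u v z : ℝ) : Set ℝ :=
  {w | ∃ k : ℤ, -(rhoMinusPt T u v z : ℤ) ≤ k ∧ k < (rhoPlusPt T u v z : ℤ) ∧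
    w = (T ^ k) z}

/-- The set of division points `Div(I,T)` of `I = [u,v)` with respect to `T`. -/
def divPoints (s : ℕ) (l : ℝ) (len : Fin s → ℝ) (T : Equiv.Perm ℝ)
    (u v : ℝ) : Set ℝ :=
  ⋃ i : Fin s, neighbours T u v (sepPt l len i)

/-- The semi-interval `[u,v) ⊆ [l,r)` is admissible for `T`. -/
def Admissible (s : ℕ) (l r : ℝ) (len : Fin s → ℝ) (T : Equiv.Perm ℝ)
    (u v : ℝ) : Prop :=
  l ≤ u ∧ u < v ∧ v ≤ r ∧
  u ∈ divPoints s l len T u v ∪ {r} ∧ v ∈ divPoints s l len T u v ∪ {r}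

/-- A bundled regular `s`-interval exchange transformation. -/
structure RIET (s : ℕ) where
  l : ℝ
  r : ℝ
  len : Fin s → ℝ
  perm : Equiv.Perm (Fin s)
  T : Equiv.Perm ℝ
  isIET : IsIET s l r len perm T
  isReg : IsRegularIET s l len T

/-- The right endpoint `max (γ_s, δ_{π(s)})` of `Z(T)`. -/
def zPoint {s : ℕ} (X : RIET s) : ℝ :=
  if h : 0 < s then
    max (sepPt X.l X.len ⟨s - 1, by omega⟩)
      (imgPt X.l X.len X.perm (X.perm.symm ⟨s - 1, by omega⟩))
  else X.r

/-- The left endpoint `min (γ_2, δ_{π(2)})` of `Y(T)`. -/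
def yPoint {s : ℕ} (X : RIET s) : ℝ :=
  if h : 1 < s then
    min (sepPt X.l X.len ⟨1, h⟩) (imgPt X.l X.len X.perm (X.perm.symm ⟨1, h⟩))
  else X.l

/-- `Y = ψ(X)`: one step of the right Rauzy induction. -/
def PsiStep {s : ℕ} (X Y : RIET s) : Prop :=
  Y.l = X.l ∧ Y.r = zPoint X ∧
  ∀ z ∈ Set.Ico X.l (zPoint X), Y.T z = inducedMap X.T (Set.Ico X.l (zPoint X)) z

/-- `Y = φ(X)`: one step of the left Rauzy induction. -/
def PhiStep {s : ℕ} (X Y : RIET s) : Prop :=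
  Y.l = yPoint X ∧ Y.r = X.r ∧
  ∀ z ∈ Set.Ico (yPoint X) X.r, Y.T z = inducedMap X.T (Set.Ico (yPoint X) X.r) z

/-- Equivalence of two `s`-interval exchange transformations: `(σ, mu)` is obtained
from `(π, lam)` by rescaling, possibly combined with the reversal `τ : i ↦ s - i + 1`. -/
def IETEquiv (s : ℕ) (π σ : Equiv.Perm (Fin s)) (lam mu : Fin s → ℝ) : Prop :=
  (∃ c : ℝ, 0 < c ∧ σ = π ∧ ∀ i, mu i = c * lam i) ∨
  (∃ c : ℝ, 0 < c ∧ (∀ i, σ i = (π i).rev) ∧ ∀ i, mu i = c * lam i.rev)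

/-- The subring `ℤ[√d]` of `ℝ`. -/
def Zsd (d : ℤ) : Set ℝ := {z | ∃ m n : ℤ, z = (m : ℝ) + (n : ℝ) * Real.sqrt d}

/-- `Ψ(z) = max (|m|,|n|)` for `z = m + n√d` (the representation being unique
when `d ≥ 2` is squarefree). -/
def PsiNum (d : ℤ) (z : ℝ) : ℕ :=
  sInf {k : ℕ | ∃ m n : ℤ, z = (m : ℝ) + (n : ℝ) * Real.sqrt d ∧
    k = max m.natAbs n.natAbs}

/-- `Ψ(S) = max {Ψ(z) : z ∈ ∂S}`. -/
def PsiSet (d : ℤ) (S : Set ℝ) : ℕ := sSup (PsiNum d '' frontier S)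

/-- The reduced complexity `Π(S) = |S| ⬝ Ψ(S)`. -/
def PiSet (d : ℤ) (S : Set ℝ) : ℝ := (volume S).toReal * PsiSet d S

/-- `S` belongs to the algebra `A([l,r))`: a nonempty finite union of semi-intervals
of `[l,r)` with endpoints in `ℤ[√d]`. -/
def MemA (d : ℤ) (l r : ℝ) (S : Set ℝ) : Prop :=
  S.Nonempty ∧ S ⊆ Set.Ico l r ∧
  ∃ (k : ℕ) (a b : Fin k → ℝ), (∀ j, a j ∈ Zsd d ∧ b j ∈ Zsd d ∧ a j < b j) ∧
    S = ⋃ j, Set.Ico (a j) (b j)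

/-- The interval exchange transformation with data `(l, r, len, π)` is defined over
`ℤ[√d]`: `l`, `r`, the separation points and the translation values lie in `ℤ[√d]`. -/
def DefinedOverZ (d : ℤ) (s : ℕ) (l r : ℝ) (len : Fin s → ℝ)
    (π : Equiv.Perm (Fin s)) : Prop :=
  l ∈ Zsd d ∧ r ∈ Zsd d ∧
  ∀ i, sepPt l len i ∈ Zsd d ∧ (imgPt l len π i - sepPt l len i) ∈ Zsd d

/-- Maximal positive return time `ρ⁺(S)`. -/
def rhoPlusSet (T : Equiv.Perm ℝ) (S : Set ℝ) : ℕ :=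
  sInf {n : ℕ | 1 ≤ n ∧ ⇑(T ^ n) '' S ⊆ ⋃ i ∈ Finset.range n, ⇑(T ^ i) '' S}

/-- Maximal negative return time `ρ⁻(S)`. -/
def rhoMinusSet (T : Equiv.Perm ℝ) (S : Set ℝ) : ℕ :=
  sInf {m : ℕ | 1 ≤ m ∧ ⇑(T ^ m) '' S ⊆ ⋃ i ∈ Finset.range m, ⇑(T⁻¹ ^ i) '' S}

/-- Minimal positive return time `σ⁺(S)`. -/
def sigmaPlusSet (T : Equiv.Perm ℝ) (S : Set ℝ) : ℕ :=
  sInf {n : ℕ | 1 ≤ n ∧ (⇑(T ^ n) '' S ∩ S).Nonempty}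

/-- Minimal negative return time `σ⁻(S)`. -/
def sigmaMinusSet (T : Equiv.Perm ℝ) (S : Set ℝ) : ℕ :=
  sInf {m : ℕ | 1 ≤ m ∧ (⇑(T⁻¹ ^ m) '' S ∩ S).Nonempty}

/-- `D_{m,n}(T) = ⋃_{i=-m+1}^{n} T^i (Sep(T))`. -/
def Dmn (s : ℕ) (l : ℝ) (len : Fin s → ℝ) (T : Equiv.Perm ℝ) (m n : ℕ) : Set ℝ :=
  {w | ∃ (i : Fin s) (k : ℤ), -(m : ℤ) + 1 ≤ k ∧ k ≤ (n : ℤ) ∧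
    w = (T ^ k) (sepPt l len i)}

/-- `[u,v)` belongs to `U(T) = ⋃_{m,n ≥ 1} U_{m,n}(T)`: it is one of the
semi-intervals into which `D_{m,n}(T)` partitions `[l,r)`. -/
def MemU (s : ℕ) (l r : ℝ) (len : Fin s → ℝ) (T : Equiv.Perm ℝ) (u v : ℝ) : Prop :=
  ∃ m n : ℕ, 1 ≤ m ∧ 1 ≤ n ∧ u ∈ Dmn s l len T m n ∧
    (v ∈ Dmn s l len T m n ∨ v = r) ∧ ∀ w ∈ Dmn s l len T m n, w ∉ Set.Ioo u v

section KeaneAux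

variable {s : ℕ}

private lemma sepPt_zero (l : ℝ) (len : Fin s → ℝ) (h0 : 0 < s) :
    sepPt l len ⟨0, h0⟩ = l := by
  unfold sepPt
  rw [Finset.filter_false_of_mem, Finset.sum_empty, add_zero]
  intro j _
  simp [Fin.lt_def]

private lemma sepPt_succ (l : ℝ) (len : Fin s → ℝ) (i : Fin s) (h : i.val + 1 < s) :
    sepPt l len ⟨i.val + 1, h⟩ = sepPt l len i + len i := by
  unfold sepPt
  have hins : (Finset.univ.filter (fun j => j < (⟨i.val + 1, h⟩ : Fin s))) =
      insert i (Finset.univ.filter (fun j => j < i)) := by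
    ext j
    simp only [Finset.mem_filter, Finset.mem_univ, true_and, Finset.mem_insert,
      Fin.lt_def, Fin.ext_iff]
    omega
  rw [hins, Finset.sum_insert (by
    simp only [Finset.mem_filter, Finset.mem_univ, true_and]
    exact lt_irrefl i)]
  ring

private lemma sepPt_last (l : ℝ) (len : Fin s → ℝ) (h0 : 0 < s) :
    sepPt l len ⟨s - 1, by omega⟩ + len ⟨s - 1, by omega⟩ = l + ∑ i, len i := by
  unfold sepPt
  have hfil : (Finset.univ.filter (fun j => j < (⟨s - 1, by omega⟩ : Fin s))) =
      Finset.univ.erase ⟨s - 1, by omega⟩ := by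
    ext j
    have hj := j.isLt
    simp [Fin.lt_def, Fin.ext_iff]
    omega
  rw [hfil, add_assoc, Finset.sum_erase_add _ _ (Finset.mem_univ _)]

private lemma sepPt_strictMono (l : ℝ) {len : Fin s → ℝ} (hpos : ∀ i, 0 < len i) :
    StrictMono (sepPt l len) := by
  intro i j hij
  unfold sepPt
  apply add_lt_add_right
  apply Finset.sum_lt_sum_of_subset (i := i)
  · intro x hx
    simp only [Finset.mem_filter, Finset.mem_univ, true_and] at hx ⊢
    exact lt_trans hx hij
  · simp [hij]
  · simp
  · exact hpos i
  · intro x _ _; exact (hpos x).le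

private lemma sepPt_ge (l : ℝ) {len : Fin s → ℝ} (hpos : ∀ i, 0 < len i) (i : Fin s) :
    l ≤ sepPt l len i := by
  unfold sepPt
  have : (0:ℝ) ≤ ∑ j ∈ Finset.univ.filter (fun j => j < i), len j :=
    Finset.sum_nonneg fun j _ => (hpos j).le
  linarith

private lemma sepPt_add_le (l : ℝ) {len : Fin s → ℝ} (hpos : ∀ i, 0 < len i) (i : Fin s) :
    sepPt l len i + len i ≤ l + ∑ j, len j := by
  unfold sepPt
  have hsub : insert i (Finset.univ.filter (fun j => j < i)) ⊆ Finset.univ := by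
    intro x _; exact Finset.mem_univ x
  have := Finset.sum_le_sum_of_subset_of_nonneg hsub (fun j _ _ => (hpos j).le)
  rw [Finset.sum_insert (by simp)] at this
  linarith

private lemma sepPt_cover (l r : ℝ) {len : Fin s → ℝ} (h0 : 0 < s)
    (hpos : ∀ i, 0 < len i) (hsum : ∑ i, len i = r - l)
    {w : ℝ} (hw : w ∈ Set.Ico l r) :
    ∃ i, w ∈ Set.Ico (sepPt l len i) (sepPt l len i + len i) := by
  classical
  set C := Finset.univ.filter (fun i : Fin s => sepPt l len i ≤ w) with hC
  have hCne : C.Nonempty := ⟨⟨0, h0⟩, by simp [hC, sepPt_zero l len h0, hw.1]⟩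
  set i := C.max' hCne with hi
  have hile : sepPt l len i ≤ w := by
    have := C.max'_mem hCne
    simp only [hC, Finset.mem_filter, Finset.mem_univ, true_and] at this
    exact this
  refine ⟨i, hile, ?_⟩
  by_contra hge
  push_neg at hge
  by_cases hlast : i.val + 1 < s
  · have hnext : sepPt l len ⟨i.val + 1, hlast⟩ ≤ w := by
      rw [sepPt_succ]; exact hge
    have hmem : (⟨i.val + 1, hlast⟩ : Fin s) ∈ C := by simp [hC, hnext]
    have hle := C.le_max' _ hmem
    rw [← hi] at hle
    have hle' : i.val + 1 ≤ i.val := hle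
    omega
  · have hieq : i = ⟨s - 1, by omega⟩ := by
      have h1 := i.isLt
      exact Fin.ext (show i.val = s - 1 by omega)
    have := sepPt_last l len h0
    rw [hieq] at hge
    rw [this, hsum] at hge
    have := hw.2; linarith

private lemma imgPt_eq (l : ℝ) (len : Fin s → ℝ) (π : Equiv.Perm (Fin s)) (i : Fin s) :
    imgPt l len π i = sepPt l (fun k => len (π.symm k)) (π i) := by
  unfold imgPt sepPt
  congr 1
  refine Finset.sum_equiv π ?_ ?_
  · intro j; simp
  · intro j _; simp

private lemma img_cover {l r : ℝ} {len : Fin s → ℝ} {π : Equiv.Perm (Fin s)} (h0 : 0 < s)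
    (hpos : ∀ i, 0 < len i) (hsum : ∑ i, len i = r - l)
    {w : ℝ} (hw : w ∈ Set.Ico l r) :
    ∃ i, w ∈ Set.Ico (imgPt l len π i) (imgPt l len π i + len i) := by
  have hpos' : ∀ k, 0 < len (π.symm k) := fun k => hpos _
  have hsum' : ∑ k, len (π.symm k) = r - l := by
    rw [Equiv.sum_comp π.symm len]; exact hsum
  obtain ⟨k, hk⟩ := sepPt_cover l r h0 hpos' hsum' hw
  refine ⟨π.symm k, ?_⟩
  rw [imgPt_eq]
  simpa using hk

private lemma img_ge {l : ℝ} {len : Fin s → ℝ} {π : Equiv.Perm (Fin s)}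
    (hpos : ∀ i, 0 < len i) (i : Fin s) : l ≤ imgPt l len π i := by
  rw [imgPt_eq]
  exact sepPt_ge l (fun k => hpos _) _

private lemma img_add_le {l r : ℝ} {len : Fin s → ℝ} {π : Equiv.Perm (Fin s)}
    (hpos : ∀ i, 0 < len i) (hsum : ∑ i, len i = r - l) (i : Fin s) :
    imgPt l len π i + len i ≤ r := by
  rw [imgPt_eq]
  have h := sepPt_add_le l (len := fun k => len (π.symm k)) (fun k => hpos _) (π i)
  simp only [Equiv.symm_apply_apply] at h
  rw [Equiv.sum_comp π.symm len, hsum] at h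
  linarith

private lemma sepPt_add_le_r {l r : ℝ} {len : Fin s → ℝ}
    (hpos : ∀ i, 0 < len i) (hsum : ∑ i, len i = r - l) (i : Fin s) :
    sepPt l len i + len i ≤ r := by
  have := sepPt_add_le l hpos i
  rw [hsum] at this; linarith

end KeaneAux

private lemma perm_inv_apply_self {α : Type*} (f : Equiv.Perm α) (x : α) : f⁻¹ (f x) = x :=
  f.symm_apply_apply x

private lemma perm_apply_inv_self {α : Type*} (f : Equiv.Perm α) (x : α) : f (f⁻¹ x) = x :=
  f.apply_symm_apply x

section KeaneWalk

variable {s : ℕ}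

private lemma gaps_contradiction {y : ℕ → ℝ} {e A B : ℝ} (he : 0 < e)
    (hsub : ∀ k, Set.Ioo (y k - e) (y k) ⊆ Set.Ioo A B)
    (hdisj : ∀ k m, k ≠ m →
      Set.Ioo (y k - e) (y k) ∩ Set.Ioo (y m - e) (y m) = ∅) : False := by
  have hAB : A < B := by
    have hm : y 0 - e / 2 ∈ Set.Ioo (y 0 - e) (y 0) := by
      constructor <;> linarith
    have := hsub 0 hm
    exact lt_trans this.1 this.2
  obtain ⟨n, hn⟩ := exists_nat_gt ((B - A) / e)
  rw [div_lt_iff₀ he] at hn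
  have hvol : ∀ k, volume (Set.Ioo (y k - e) (y k)) = ENNReal.ofReal e := by
    intro k; rw [Real.volume_Ioo]; congr 1; ring
  have hd : (↑(Finset.range n) : Set ℕ).PairwiseDisjoint
      (fun k => Set.Ioo (y k - e) (y k)) := by
    intro a _ b _ hab
    rw [Function.onFun, Set.disjoint_iff_inter_eq_empty]
    exact hdisj a b hab
  have hunion := MeasureTheory.measure_biUnion_finset (μ := volume) hd
    (fun b _ => measurableSet_Ioo)
  have hsub2 : (⋃ k ∈ Finset.range n, Set.Ioo (y k - e) (y k)) ⊆ Set.Ioo A B := by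
    intro v hv
    simp only [Set.mem_iUnion] at hv
    obtain ⟨k, _, hk⟩ := hv
    exact hsub k hk
  have hle := MeasureTheory.measure_mono (μ := volume) hsub2
  rw [hunion] at hle
  simp only [hvol, Finset.sum_const, Finset.card_range, nsmul_eq_mul, Real.volume_Ioo] at hle
  have hn' : (n : ENNReal) * ENNReal.ofReal e = ENNReal.ofReal (n * e) := by
    rw [ENNReal.ofReal_mul (by positivity : (0:ℝ) ≤ (n:ℝ))]
    congr 1
    exact (ENNReal.ofReal_natCast n).symm
  rw [hn'] at hle
  have hfin := (ENNReal.ofReal_le_ofReal_iff (by linarith)).mp hle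
  linarith

private lemma walk_closure_step (σ : Equiv.Perm ℝ) (P L : Fin s → ℝ) (A B : ℝ)
    (hcover : ∀ w ∈ Set.Ico A B, ∃ i, w ∈ Set.Ico (P i) (P i + L i))
    (htrans : ∀ i, ∀ z ∈ Set.Ico (P i) (P i + L i), σ z = z + (σ (P i) - P i))
    (ORB : Set ℝ) (hfwd : ∀ o ∈ ORB, σ o ∈ ORB)
    {w : ℝ} (hw : w ∈ closure ORB) (hwI : w ∈ Set.Ico A B) (hwP : ∀ i, w ≠ P i) :
    σ w ∈ closure ORB := by
  obtain ⟨i, hi⟩ := hcover w hwI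
  have hlt : P i < w := lt_of_le_of_ne hi.1 (Ne.symm (hwP i))
  set c := σ (P i) - P i with hc
  have hσw : σ w = w + c := htrans i w hi
  rw [hσw, mem_closure_iff]
  intro O hO hmem
  have hO' : IsOpen ((fun x => x + c) ⁻¹' O) := hO.preimage (by continuity)
  have hwO' : w ∈ (fun x => x + c) ⁻¹' O ∩ Set.Ioo (P i) (P i + L i) :=
    ⟨hmem, hlt, hi.2⟩
  have hopen : IsOpen ((fun x => x + c) ⁻¹' O ∩ Set.Ioo (P i) (P i + L i)) :=
    hO'.inter isOpen_Ioo
  obtain ⟨o, hoO, hoORB⟩ := mem_closure_iff.mp hw _ hopen hwO'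
  refine ⟨σ o, ?_, hfwd o hoORB⟩
  have : σ o = o + c := htrans i o ⟨hoO.2.1.le, hoO.2.2⟩
  rw [this]
  exact hoO.1

private lemma walk_gapL (σ : Equiv.Perm ℝ) (P L : Fin s → ℝ) (A B : ℝ)
    (hcover : ∀ w ∈ Set.Ico A B, ∃ i, w ∈ Set.Ico (P i) (P i + L i))
    (htrans : ∀ i, ∀ z ∈ Set.Ico (P i) (P i + L i), σ z = z + (σ (P i) - P i))
    (hmap : ∀ w ∈ Set.Ico A B, σ w ∈ Set.Ico A B)
    (hnp : ∀ w ∈ Set.Ico A B, ∀ n : ℕ, 1 ≤ n → (σ ^ n) w ≠ w)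
    (ORB : Set ℝ) (hfwd : ∀ o ∈ ORB, σ o ∈ ORB) (hbwd : ∀ o ∈ ORB, σ⁻¹ o ∈ ORB)
    {w₀ : ℝ} (hw₀ : w₀ ∈ closure ORB) (hw₀I : w₀ ∈ Set.Ico A B)
    {g₀ : ℝ} (hg₀ : 0 < g₀) (hgap : Set.Ioo (w₀ - g₀) w₀ ∩ ORB = ∅) :
    ∃ (k : ℕ) (i : Fin s), (σ ^ k) w₀ = P i := by
  by_contra hno
  push_neg at hno
  set u : ℕ → ℝ := fun k => (σ ^ k) w₀ with hu
  have hu0 : u 0 = w₀ := by simp [hu]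
  have husucc : ∀ k, u (k + 1) = σ (u k) := by
    intro k
    simp only [hu, pow_succ', Equiv.Perm.mul_apply]
  have huI : ∀ k, u k ∈ Set.Ico A B := by
    intro k
    induction k with
    | zero => rw [hu0]; exact hw₀I
    | succ k ih => rw [husucc]; exact hmap _ ih
  have hucl : ∀ k, u k ∈ closure ORB := by
    intro k
    induction k with
    | zero => rw [hu0]; exact hw₀
    | succ k ih =>
        rw [husucc]
        exact walk_closure_step σ P L A B hcover htrans ORB hfwd ih (huI k)
          (fun i => hno k i)
  have hPmem : ∀ k, ∃ i, u k ∈ Set.Ico (P i) (P i + L i) := fun k => hcover _ (huI k)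
  choose idx hidx using hPmem
  have hPlt : ∀ k, P (idx k) < u k :=
    fun k => lt_of_le_of_ne (hidx k).1 (Ne.symm (hno k (idx k)))
  set g : ℕ → ℝ := fun n => Nat.rec g₀ (fun k gk => min gk (u k - P (idx k))) n with hg
  have hgsucc : ∀ k, g (k + 1) = min (g k) (u k - P (idx k)) := fun k => rfl
  have hg0 : g 0 = g₀ := rfl
  have hgpos : ∀ k, 0 < g k := by
    intro k
    induction k with
    | zero => exact hg₀
    | succ k ih =>
        rw [hgsucc]
        exact lt_min ih (by linarith [hPlt k])
  have hgmono : ∀ k, g (k + 1) ≤ g k := fun k => min_le_left _ _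
  have hgant : Antitone g := antitone_nat_of_succ_le hgmono
  have hfree : ∀ k, Set.Ioo (u k - g k) (u k) ∩ ORB = ∅ := by
    intro k
    induction k with
    | zero => rw [hu0, hg0]; exact hgap
    | succ k ih =>
        rw [Set.eq_empty_iff_forall_notMem]
        rintro v ⟨⟨hv1, hv2⟩, hvORB⟩
        have hminr : g (k + 1) ≤ u k - P (idx k) := by
          rw [hgsucc]; exact min_le_right _ _
        set c := σ (P (idx k)) - P (idx k) with hc
        have hcu : u (k + 1) = u k + c := by
          rw [husucc]; exact htrans (idx k) (u k) (hidx k)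
        have hwmem : v - c ∈ Set.Ico (P (idx k)) (P (idx k) + L (idx k)) := by
          constructor
          · have := (hidx k).1; linarith
          · have := (hidx k).2; linarith
        have hσ : σ (v - c) = v := by
          rw [htrans (idx k) _ hwmem]; ring
        have hvpre : σ⁻¹ v = v - c :=
          σ.injective (by rw [perm_apply_inv_self, hσ])
        have hmem2 : v - c ∈ Set.Ioo (u k - g k) (u k) := by
          have := hgmono k
          constructor <;> linarith
        have hbad : v - c ∈ Set.Ioo (u k - g k) (u k) ∩ ORB :=
          ⟨hmem2, hvpre ▸ hbwd v hvORB⟩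
        rw [ih] at hbad
        exact hbad
  have huinj : ∀ k m, k < m → u k ≠ u m := by
    intro k m hkm heq
    have h1 : (σ ^ (m - k)) (u k) = u m := by
      rw [hu]
      rw [← Equiv.Perm.mul_apply, ← pow_add]
      congr 2
      omega
    rw [← heq] at h1
    exact hnp _ (huI k) (m - k) (by omega) h1
  have hnotin : ∀ k m, u k ∉ Set.Ioo (u m - g m) (u m) := by
    intro k m hin
    obtain ⟨o, ho⟩ := mem_closure_iff.mp (hucl k) _ isOpen_Ioo hin
    have : o ∈ Set.Ioo (u m - g m) (u m) ∩ ORB := ho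
    rw [hfree m] at this
    exact this
  have hdisj : ∀ k m, k ≠ m →
      Set.Ioo (u k - g k) (u k) ∩ Set.Ioo (u m - g m) (u m) = ∅ := by
    have key : ∀ k m, u k < u m →
        Set.Ioo (u k - g k) (u k) ∩ Set.Ioo (u m - g m) (u m) = ∅ := by
      intro k m hlt
      have h2 : u k ≤ u m - g m := by
        by_contra hcon
        push_neg at hcon
        exact hnotin k m ⟨hcon, hlt⟩
      rw [Set.eq_empty_iff_forall_notMem]
      rintro v ⟨⟨_, hv2⟩, ⟨hv3, _⟩⟩
      linarith
    intro k m hkm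
    rcases lt_trichotomy (u k) (u m) with h | h | h
    · exact key k m h
    · rcases lt_or_gt_of_ne hkm with h' | h'
      · exact absurd h (huinj k m h')
      · exact absurd h.symm (huinj m k h')
    · rw [Set.inter_comm]; exact key m k h
  set E := {k : ℕ | g (k + 1) < g k} with hE
  have hEpt : ∀ k ∈ E, P (idx k) ∈ Set.Ioo (u k - g k) (u k) := by
    intro k hk
    have h1 : g (k + 1) < g k := hk
    have h2 : u k - P (idx k) < g k := by
      rw [hgsucc] at h1
      rcases min_cases (g k) (u k - P (idx k)) with ⟨he, _⟩ | ⟨he, _⟩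
      · rw [he] at h1; exact absurd h1 (lt_irrefl _)
      · rw [he] at h1; exact h1
    exact ⟨by linarith, hPlt k⟩
  have hEfin : E.Finite := by
    have hinj : Set.InjOn (fun k => P (idx k)) E := by
      intro k hk m hm heq
      by_contra hne
      replace heq : P (idx k) = P (idx m) := heq
      have h1 := hEpt k hk
      have h2 := hEpt m hm
      rw [heq] at h1
      have hbad : P (idx m) ∈ Set.Ioo (u k - g k) (u k) ∩
          Set.Ioo (u m - g m) (u m) := ⟨h1, h2⟩
      rw [hdisj k m hne] at hbad
      exact hbad
    have himg : ((fun k => P (idx k)) '' E).Finite :=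
      (Set.finite_range P).subset (by rintro _ ⟨k, _, rfl⟩; exact ⟨idx k, rfl⟩)
    exact Set.Finite.of_finite_image himg hinj
  obtain ⟨N, hN⟩ : ∃ N, ∀ k, N ≤ k → g k = g N := by
    obtain ⟨N₀, hN₀⟩ := hEfin.bddAbove
    have haux : ∀ m, g (N₀ + 1 + m) = g (N₀ + 1) := by
      intro m
      induction m with
      | zero => rfl
      | succ m ih =>
          have hnotE : (N₀ + 1 + m) ∉ E := by
            intro hmem
            have := hN₀ hmem
            omega
          have hnlt : ¬ g (N₀ + 1 + m + 1) < g (N₀ + 1 + m) := hnotE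
          have heq : g (N₀ + 1 + m + 1) = g (N₀ + 1 + m) :=
            le_antisymm (hgmono _) (not_lt.mp hnlt)
          rw [show N₀ + 1 + (m + 1) = N₀ + 1 + m + 1 from rfl, heq, ih]
    refine ⟨N₀ + 1, fun k hk => ?_⟩
    obtain ⟨m, rfl⟩ := Nat.exists_eq_add_of_le hk
    exact haux m
  have hgNle : g N ≤ g₀ := by
    have := hgant (Nat.zero_le N)
    rw [hg0] at this
    exact this
  refine gaps_contradiction (y := fun k => u (N + k)) (e := g N) (A := A - g₀) (B := B)
    (hgpos N) ?_ ?_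
  · intro k v hv
    have h1 := huI (N + k)
    have h2 : g (N + k) = g N := hN _ (Nat.le_add_right _ _)
    constructor
    · have := hv.1; have := h1.1; linarith
    · have := hv.2; have := h1.2; linarith
  · intro k m hkm
    have h2k : g (N + k) = g N := hN _ (Nat.le_add_right _ _)
    have h2m : g (N + m) = g N := hN _ (Nat.le_add_right _ _)
    have := hdisj (N + k) (N + m) (by omega)
    rw [h2k, h2m] at this
    exact this

end KeaneWalk
section KeaneWalkR

variable {s : ℕ}

private lemma walk_gapR (σ : Equiv.Perm ℝ) (P L : Fin s → ℝ) (A B : ℝ)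
    (hcover : ∀ w ∈ Set.Ico A B, ∃ i, w ∈ Set.Ico (P i) (P i + L i))
    (htrans : ∀ i, ∀ z ∈ Set.Ico (P i) (P i + L i), σ z = z + (σ (P i) - P i))
    (hmap : ∀ w ∈ Set.Ico A B, σ w ∈ Set.Ico A B)
    (hnp : ∀ w ∈ Set.Ico A B, ∀ n : ℕ, 1 ≤ n → (σ ^ n) w ≠ w)
    (ORB : Set ℝ) (hfwd : ∀ o ∈ ORB, σ o ∈ ORB) (hbwd : ∀ o ∈ ORB, σ⁻¹ o ∈ ORB)
    {w₀ : ℝ} (hw₀ : w₀ ∈ closure ORB) (hw₀I : w₀ ∈ Set.Ico A B)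
    {g₀ : ℝ} (hg₀ : 0 < g₀) (hgap : Set.Ioo w₀ (w₀ + g₀) ∩ ORB = ∅) :
    ∃ (k : ℕ) (i : Fin s), (σ ^ k) w₀ = P i := by
  by_contra hno
  push_neg at hno
  set u : ℕ → ℝ := fun k => (σ ^ k) w₀ with hu
  have hu0 : u 0 = w₀ := by simp [hu]
  have husucc : ∀ k, u (k + 1) = σ (u k) := by
    intro k
    simp only [hu, pow_succ', Equiv.Perm.mul_apply]
  have huI : ∀ k, u k ∈ Set.Ico A B := by
    intro k
    induction k with
    | zero => rw [hu0]; exact hw₀I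
    | succ k ih => rw [husucc]; exact hmap _ ih
  have hucl : ∀ k, u k ∈ closure ORB := by
    intro k
    induction k with
    | zero => rw [hu0]; exact hw₀
    | succ k ih =>
        rw [husucc]
        exact walk_closure_step σ P L A B hcover htrans ORB hfwd ih (huI k)
          (fun i => hno k i)
  have hPmem : ∀ k, ∃ i, u k ∈ Set.Ico (P i) (P i + L i) := fun k => hcover _ (huI k)
  choose idx hidx using hPmem
  set g : ℕ → ℝ := fun n => Nat.rec g₀ (fun k gk => min gk (P (idx k) + L (idx k) - u k)) n
    with hg
  have hgsucc : ∀ k, g (k + 1) = min (g k) (P (idx k) + L (idx k) - u k) := fun k => rfl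
  have hg0 : g 0 = g₀ := rfl
  have hgpos : ∀ k, 0 < g k := by
    intro k
    induction k with
    | zero => exact hg₀
    | succ k ih =>
        rw [hgsucc]
        exact lt_min ih (by linarith [(hidx k).2])
  have hgmono : ∀ k, g (k + 1) ≤ g k := fun k => min_le_left _ _
  have hgant : Antitone g := antitone_nat_of_succ_le hgmono
  have hfree : ∀ k, Set.Ioo (u k) (u k + g k) ∩ ORB = ∅ := by
    intro k
    induction k with
    | zero => rw [hu0, hg0]; exact hgap
    | succ k ih =>
        rw [Set.eq_empty_iff_forall_notMem]
        rintro v ⟨⟨hv1, hv2⟩, hvORB⟩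
        have hminr : g (k + 1) ≤ P (idx k) + L (idx k) - u k := by
          rw [hgsucc]; exact min_le_right _ _
        set c := σ (P (idx k)) - P (idx k) with hc
        have hcu : u (k + 1) = u k + c := by
          rw [husucc]; exact htrans (idx k) (u k) (hidx k)
        have hwmem : v - c ∈ Set.Ico (P (idx k)) (P (idx k) + L (idx k)) := by
          constructor
          · have := (hidx k).1; linarith
          · linarith
        have hσ : σ (v - c) = v := by
          rw [htrans (idx k) _ hwmem]; ring
        have hvpre : σ⁻¹ v = v - c :=
          σ.injective (by rw [perm_apply_inv_self, hσ])
        have hmem2 : v - c ∈ Set.Ioo (u k) (u k + g k) := by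
          have := hgmono k
          constructor <;> linarith
        have hbad : v - c ∈ Set.Ioo (u k) (u k + g k) ∩ ORB :=
          ⟨hmem2, hvpre ▸ hbwd v hvORB⟩
        rw [ih] at hbad
        exact hbad
  have huinj : ∀ k m, k < m → u k ≠ u m := by
    intro k m hkm heq
    have h1 : (σ ^ (m - k)) (u k) = u m := by
      rw [hu]
      rw [← Equiv.Perm.mul_apply, ← pow_add]
      congr 2
      omega
    rw [← heq] at h1
    exact hnp _ (huI k) (m - k) (by omega) h1
  have hnotin : ∀ k m, u k ∉ Set.Ioo (u m) (u m + g m) := by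
    intro k m hin
    obtain ⟨o, ho⟩ := mem_closure_iff.mp (hucl k) _ isOpen_Ioo hin
    have hbad : o ∈ Set.Ioo (u m) (u m + g m) ∩ ORB := ho
    rw [hfree m] at hbad
    exact hbad
  have hdisj : ∀ k m, k ≠ m →
      Set.Ioo (u k) (u k + g k) ∩ Set.Ioo (u m) (u m + g m) = ∅ := by
    have key : ∀ k m, u k < u m →
        Set.Ioo (u k) (u k + g k) ∩ Set.Ioo (u m) (u m + g m) = ∅ := by
      intro k m hlt
      have h2 : u k + g k ≤ u m := by
        by_contra hcon
        push_neg at hcon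
        exact hnotin m k ⟨hlt, hcon⟩
      rw [Set.eq_empty_iff_forall_notMem]
      rintro v ⟨⟨_, hv2⟩, ⟨hv3, _⟩⟩
      linarith
    intro k m hkm
    rcases lt_trichotomy (u k) (u m) with h | h | h
    · exact key k m h
    · rcases lt_or_gt_of_ne hkm with h' | h'
      · exact absurd h (huinj k m h')
      · exact absurd h.symm (huinj m k h')
    · rw [Set.inter_comm]; exact key m k h
  set E := {k : ℕ | g (k + 1) < g k} with hE
  have hEpt : ∀ k ∈ E, P (idx k) + L (idx k) ∈ Set.Ioo (u k) (u k + g k) := by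
    intro k hk
    have h1 : g (k + 1) < g k := hk
    have h2 : P (idx k) + L (idx k) - u k < g k := by
      rw [hgsucc] at h1
      rcases min_cases (g k) (P (idx k) + L (idx k) - u k) with ⟨he, _⟩ | ⟨he, _⟩
      · rw [he] at h1; exact absurd h1 (lt_irrefl _)
      · rw [he] at h1; exact h1
    exact ⟨(hidx k).2, by linarith⟩
  have hEfin : E.Finite := by
    have hinj : Set.InjOn (fun k => P (idx k) + L (idx k)) E := by
      intro k hk m hm heq
      by_contra hne
      replace heq : P (idx k) + L (idx k) = P (idx m) + L (idx m) := heq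
      have h1 := hEpt k hk
      have h2 := hEpt m hm
      rw [heq] at h1
      have hbad : P (idx m) + L (idx m) ∈ Set.Ioo (u k) (u k + g k) ∩
          Set.Ioo (u m) (u m + g m) := ⟨h1, h2⟩
      rw [hdisj k m hne] at hbad
      exact hbad
    have himg : ((fun k => P (idx k) + L (idx k)) '' E).Finite :=
      (Set.finite_range (fun i => P i + L i)).subset
        (by rintro _ ⟨k, _, rfl⟩; exact ⟨idx k, rfl⟩)
    exact Set.Finite.of_finite_image himg hinj
  obtain ⟨N, hN⟩ : ∃ N, ∀ k, N ≤ k → g k = g N := by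
    obtain ⟨N₀, hN₀⟩ := hEfin.bddAbove
    have haux : ∀ m, g (N₀ + 1 + m) = g (N₀ + 1) := by
      intro m
      induction m with
      | zero => rfl
      | succ m ih =>
          have hnotE : (N₀ + 1 + m) ∉ E := by
            intro hmem
            have := hN₀ hmem
            omega
          have hnlt : ¬ g (N₀ + 1 + m + 1) < g (N₀ + 1 + m) := hnotE
          have heq : g (N₀ + 1 + m + 1) = g (N₀ + 1 + m) :=
            le_antisymm (hgmono _) (not_lt.mp hnlt)
          rw [show N₀ + 1 + (m + 1) = N₀ + 1 + m + 1 from rfl, heq, ih]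
    refine ⟨N₀ + 1, fun k hk => ?_⟩
    obtain ⟨m, rfl⟩ := Nat.exists_eq_add_of_le hk
    exact haux m
  have hgNle : g N ≤ g₀ := by
    have := hgant (Nat.zero_le N)
    rw [hg0] at this
    exact this
  refine gaps_contradiction (y := fun k => u (N + k) + g N) (e := g N) (A := A)
    (B := B + g₀) (hgpos N) ?_ ?_
  · intro k v hv
    simp only [Set.mem_Ioo] at hv ⊢
    have h1 := huI (N + k)
    obtain ⟨hv1, hv2⟩ := hv
    constructor
    · have := h1.1; linarith
    · have := h1.2; linarith
  · intro k m hkm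
    have h2k : g (N + k) = g N := hN _ (Nat.le_add_right _ _)
    have h2m : g (N + m) = g N := hN _ (Nat.le_add_right _ _)
    have hd := hdisj (N + k) (N + m) (by omega)
    rw [h2k, h2m] at hd
    rw [show u (N + k) + g N - g N = u (N + k) from by ring,
        show u (N + m) + g N - g N = u (N + m) from by ring]
    exact hd

end KeaneWalkR
section KeaneT

variable {s : ℕ} {l r : ℝ} {len : Fin s → ℝ} {π : Equiv.Perm (Fin s)} {T : Equiv.Perm ℝ}

private lemma T_sep (hIET : IsIET s l r len π T) (i : Fin s) :
    T (sepPt l len i) = imgPt l len π i := by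
  have h := hIET.2.2.2.2 i (sepPt l len i)
    ⟨le_refl _, by linarith [hIET.2.1 i]⟩
  rw [h]; ring

private lemma T_mapsIco (h0 : 0 < s) (hIET : IsIET s l r len π T) :
    ∀ w ∈ Set.Ico l r, T w ∈ Set.Ico l r := by
  intro w hw
  obtain ⟨i, hi⟩ := sepPt_cover l r h0 hIET.2.1 hIET.2.2.1 hw
  rw [hIET.2.2.2.2 i w hi]
  constructor
  · have h1 := img_ge (π := π) (l := l) hIET.2.1 i
    have h2 := hi.1
    linarith
  · have h1 := img_add_le (π := π) hIET.2.1 hIET.2.2.1 i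
    have h2 := hi.2
    linarith

private lemma Tinv_sep (hIET : IsIET s l r len π T) (i : Fin s) :
    T⁻¹ (imgPt l len π i) = sepPt l len i := by
  rw [← T_sep hIET, perm_inv_apply_self]

private lemma Tinv_img (hIET : IsIET s l r len π T) (i : Fin s) :
    ∀ z ∈ Set.Ico (imgPt l len π i) (imgPt l len π i + len i),
      T⁻¹ z = z + (T⁻¹ (imgPt l len π i) - imgPt l len π i) := by
  intro z hz
  rw [Tinv_sep hIET]
  have hmem : z - (imgPt l len π i - sepPt l len i) ∈
      Set.Ico (sepPt l len i) (sepPt l len i + len i) := by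
    constructor
    · have := hz.1; linarith
    · have := hz.2; linarith
  have hT : T (z - (imgPt l len π i - sepPt l len i)) = z := by
    rw [hIET.2.2.2.2 i _ hmem]; ring
  have h2 : T⁻¹ z = z - (imgPt l len π i - sepPt l len i) :=
    T.injective (by rw [perm_apply_inv_self, hT])
  rw [h2]; ring

private lemma Tinv_mapsIco (h0 : 0 < s) (hIET : IsIET s l r len π T) :
    ∀ w ∈ Set.Ico l r, T⁻¹ w ∈ Set.Ico l r := by
  intro w hw
  obtain ⟨i, hi⟩ := img_cover (π := π) h0 hIET.2.1 hIET.2.2.1 hw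
  rw [Tinv_img hIET i w hi, Tinv_sep hIET]
  constructor
  · have h1 := sepPt_ge l hIET.2.1 i
    have h2 := hi.1
    linarith
  · have h1 := sepPt_add_le_r hIET.2.1 hIET.2.2.1 i
    have h2 := hi.2
    linarith

private lemma Tpow_mem (h0 : 0 < s) (hIET : IsIET s l r len π T) :
    ∀ n : ℕ, ∀ w ∈ Set.Ico l r, (T ^ n) w ∈ Set.Ico l r := by
  intro n
  induction n with
  | zero => intro w hw; simpa using hw
  | succ n ih =>
      intro w hw
      rw [pow_succ', Equiv.Perm.mul_apply]
      exact T_mapsIco h0 hIET _ (ih w hw)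

private lemma orbit_finite_of_per (T : Equiv.Perm ℝ) (x : ℝ) {M : ℕ} (hM : 1 ≤ M)
    (hfix : (T ^ M) x = x) : (orbitZ T x).Finite := by
  have hinv : (T ^ M)⁻¹ x = x := by
    conv_lhs => rw [← hfix]
    exact perm_inv_apply_self _ _
  have hfixz : ∀ q : ℤ, (((T ^ M : Equiv.Perm ℝ)) ^ q) x = x := by
    intro q
    induction q using Int.induction_on with
    | zero => simp
    | succ i ih =>
        rw [show (i : ℤ) + 1 = 1 + i from by ring, zpow_one_add,
          Equiv.Perm.mul_apply, ih]
        exact hfix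
    | pred i ih =>
        rw [show (-(i : ℤ)) - 1 = (-1) + (-(i : ℤ)) from by ring, zpow_add,
          Equiv.Perm.mul_apply, ih, zpow_neg_one]
        exact hinv
  apply Set.Finite.subset (Set.Finite.image (fun k : ℕ => (T ^ k) x) (Set.finite_Iio M))
  rintro w ⟨n, rfl⟩
  have hMne : ((M : ℤ)) ≠ 0 := by exact_mod_cast (by omega : M ≠ 0)
  have hrr0 : 0 ≤ n % (M : ℤ) := Int.emod_nonneg n hMne
  have hrrM : n % (M : ℤ) < (M : ℤ) := Int.emod_lt_of_pos n (by exact_mod_cast hM)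
  have hdec : n = n % (M : ℤ) + (M : ℤ) * (n / (M : ℤ)) := by
    rw [add_comm]
    exact (Int.mul_ediv_add_emod n (M : ℤ)).symm
  have heq : (T ^ n) x = (T ^ (n % (M : ℤ))) x := by
    conv_lhs => rw [hdec]
    rw [zpow_add, Equiv.Perm.mul_apply, zpow_mul, zpow_natCast, hfixz]
  refine ⟨(n % (M : ℤ)).toNat, by simp only [Set.mem_Iio]; omega, ?_⟩
  show (T ^ ((n % (M : ℤ)).toNat)) x = (T ^ n) x
  rw [heq, ← zpow_natCast, Int.toNat_of_nonneg hrr0]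

private lemma per_sep_contra (hreg : IsRegularIET s l len T) {i : Fin s}
    (hi : (i : ℕ) ≠ 0) {M : ℕ} (hM : 1 ≤ M)
    (hfix : (T ^ M) (sepPt l len i) = sepPt l len i) : False :=
  (hreg.1 i hi) (orbit_finite_of_per T _ hM hfix)

private lemma disj_sep_contra (hreg : IsRegularIET s l len T) {i j : Fin s}
    (hi : (i : ℕ) ≠ 0) (hj : (j : ℕ) ≠ 0) (hij : i ≠ j) {M : ℕ}
    (hrel : (T ^ M) (sepPt l len i) = sepPt l len j) : False := by
  have h1 : sepPt l len j ∈ orbitZ T (sepPt l len i) :=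
    ⟨(M : ℤ), by rw [zpow_natCast]; exact hrel⟩
  have h2 : sepPt l len j ∈ orbitZ T (sepPt l len j) := ⟨0, by simp⟩
  exact Set.disjoint_left.mp (hreg.2 i j hi hj hij) h1 h2

private lemma exists_i0 (hs : 2 ≤ s) (hIET : IsIET s l r len π T)
    (hreg : IsRegularIET s l len T) :
    ∃ i₀ : Fin s, (i₀ : ℕ) ≠ 0 ∧ T (sepPt l len i₀) = l := by
  have h0 : 0 < s := by omega
  have himg : imgPt l len π (π.symm ⟨0, h0⟩) = l := by
    unfold imgPt
    rw [Finset.filter_false_of_mem, Finset.sum_empty, add_zero]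
    intro j _
    simp only [Equiv.apply_symm_apply]
    intro hc
    have : ((π j : Fin s) : ℕ) < 0 := hc
    omega
  have hTi₀ : T (sepPt l len (π.symm ⟨0, h0⟩)) = l := by rw [T_sep hIET, himg]
  by_cases hz : ((π.symm ⟨0, h0⟩ : Fin s) : ℕ) = 0
  · exfalso
    have hπz : π ⟨0, h0⟩ = ⟨0, h0⟩ := by
      have h1 : π.symm ⟨0, h0⟩ = ⟨0, h0⟩ := Fin.ext hz
      conv_lhs => rw [← h1]
      exact Equiv.apply_symm_apply π _
    have h1s : 1 < s := by omega
    have hi₁ne : ((π.symm ⟨1, h1s⟩ : Fin s) : ℕ) ≠ 0 := by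
      intro hc
      have h1 : π.symm ⟨1, h1s⟩ = ⟨0, h0⟩ := Fin.ext hc
      have h2 : π ⟨0, h0⟩ = ⟨1, h1s⟩ := by
        rw [← h1]
        exact Equiv.apply_symm_apply π _
      rw [hπz] at h2
      exact Nat.zero_ne_one (congrArg Fin.val h2)
    have hfil : Finset.univ.filter (fun j => π j < π (π.symm ⟨1, h1s⟩)) =
        {(⟨0, h0⟩ : Fin s)} := by
      ext j
      simp only [Equiv.apply_symm_apply, Finset.mem_filter, Finset.mem_univ, true_and,
        Finset.mem_singleton]
      constructor
      · intro hj
        have hval : ((π j : Fin s) : ℕ) < 1 := hj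
        have hπj : π j = ⟨0, h0⟩ := Fin.ext (show ((π j : Fin s) : ℕ) = 0 by omega)
        have hj2 : j = π.symm ⟨0, h0⟩ := by
          rw [← hπj]
          exact (Equiv.symm_apply_apply π j).symm
        rw [hj2]
        exact Fin.ext hz
      · intro hj
        rw [hj, hπz]
        exact (Nat.zero_lt_one : ((⟨0, h0⟩ : Fin s) : ℕ) < ((⟨1, h1s⟩ : Fin s) : ℕ))
    have himg1 : imgPt l len π (π.symm ⟨1, h1s⟩) = l + len ⟨0, h0⟩ := by
      unfold imgPt
      rw [hfil, Finset.sum_singleton]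
    have hsep1 : sepPt l len ⟨1, h1s⟩ = l + len ⟨0, h0⟩ := by
      unfold sepPt
      have hfil2 : Finset.univ.filter (fun j => j < (⟨1, h1s⟩ : Fin s)) =
          {(⟨0, h0⟩ : Fin s)} := by
        ext j
        simp only [Finset.mem_filter, Finset.mem_univ, true_and, Finset.mem_singleton,
          Fin.lt_def, Fin.ext_iff]
        omega
      rw [hfil2, Finset.sum_singleton]
    have hrel : (T ^ 1) (sepPt l len (π.symm ⟨1, h1s⟩)) = sepPt l len ⟨1, h1s⟩ := by
      rw [pow_one, T_sep hIET, himg1, hsep1]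
    have hone : ((⟨1, h1s⟩ : Fin s) : ℕ) ≠ 0 := Nat.one_ne_zero
    by_cases h12 : π.symm ⟨1, h1s⟩ = ⟨1, h1s⟩
    · rw [h12] at hrel
      exact per_sep_contra hreg hone le_rfl hrel
    · exact disj_sep_contra hreg hi₁ne hone h12 hrel
  · exact ⟨π.symm ⟨0, h0⟩, hz, hTi₀⟩

private lemma T_right_local (h0 : 0 < s) (hIET : IsIET s l r len π T) :
    ∀ n : ℕ, ∀ w ∈ Set.Ico l r, ∃ ε > 0,
      ∀ v ∈ Set.Ico w (w + ε), (T ^ n) v = v + ((T ^ n) w - w) := by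
  intro n
  induction n with
  | zero =>
      intro w _
      exact ⟨1, one_pos, fun v _ => by simp⟩
  | succ n ih =>
      intro w hw
      obtain ⟨ε₁, hε₁, hloc₁⟩ := ih w hw
      have hw' : (T ^ n) w ∈ Set.Ico l r := Tpow_mem h0 hIET n w hw
      obtain ⟨i, hi⟩ := sepPt_cover l r h0 hIET.2.1 hIET.2.2.1 hw'
      set ε₂ := sepPt l len i + len i - (T ^ n) w with hε₂def
      have hε₂ : 0 < ε₂ := by have := hi.2; simp only [hε₂def]; linarith
      refine ⟨min ε₁ ε₂, lt_min hε₁ hε₂, ?_⟩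
      intro v hv
      have hv1 : v ∈ Set.Ico w (w + ε₁) :=
        ⟨hv.1, lt_of_lt_of_le hv.2 (by simp [min_le_left])⟩
      have h1 := hloc₁ v hv1
      have hmem : (T ^ n) v ∈ Set.Ico (sepPt l len i) (sepPt l len i + len i) := by
        rw [h1]
        constructor
        · have := hi.1; have := hv.1; linarith
        · have h2 : v < w + ε₂ := lt_of_lt_of_le hv.2 (by simp [min_le_right])
          simp only [hε₂def] at h2
          linarith
      rw [pow_succ']
      simp only [Equiv.Perm.mul_apply]
      rw [hIET.2.2.2.2 i _ hmem, hIET.2.2.2.2 i _ hi, h1]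
      ring

private lemma T_two_local (h0 : 0 < s) (hIET : IsIET s l r len π T) :
    ∀ n : ℕ, ∀ w ∈ Set.Ico l r,
      (∀ k, k < n → ∀ i, (T ^ k) w ≠ sepPt l len i) → ∃ ε > 0,
      ∀ v ∈ Set.Ioo (w - ε) (w + ε), (T ^ n) v = v + ((T ^ n) w - w) := by
  intro n
  induction n with
  | zero =>
      intro w _ _
      exact ⟨1, one_pos, fun v _ => by simp⟩
  | succ n ih =>
      intro w hw hno
      obtain ⟨ε₁, hε₁, hloc₁⟩ := ih w hw (fun k hk => hno k (by omega))
      have hw' : (T ^ n) w ∈ Set.Ico l r := Tpow_mem h0 hIET n w hw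
      obtain ⟨i, hi⟩ := sepPt_cover l r h0 hIET.2.1 hIET.2.2.1 hw'
      have hlt : sepPt l len i < (T ^ n) w :=
        lt_of_le_of_ne hi.1 (Ne.symm (hno n (by omega) i))
      set ε₂ := min ((T ^ n) w - sepPt l len i) (sepPt l len i + len i - (T ^ n) w)
        with hε₂def
      have hε₂ : 0 < ε₂ := lt_min (by linarith) (by have := hi.2; linarith)
      refine ⟨min ε₁ ε₂, lt_min hε₁ hε₂, ?_⟩
      intro v hv
      have hv1 : v ∈ Set.Ioo (w - ε₁) (w + ε₁) := by
        constructor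
        · have := min_le_left ε₁ ε₂; have := hv.1; linarith
        · have := min_le_left ε₁ ε₂; have := hv.2; linarith
      have h1 := hloc₁ v hv1
      have hmem : (T ^ n) v ∈ Set.Ico (sepPt l len i) (sepPt l len i + len i) := by
        rw [h1]
        have hvl : w - ε₂ < v := by
          have := min_le_right ε₁ ε₂; have := hv.1; linarith
        have hvu : v < w + ε₂ := by
          have := min_le_right ε₁ ε₂; have := hv.2; linarith
        have h2 : ε₂ ≤ (T ^ n) w - sepPt l len i := min_le_left _ _
        have h3 : ε₂ ≤ sepPt l len i + len i - (T ^ n) w := min_le_right _ _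
        constructor
        · linarith
        · linarith
      rw [pow_succ']
      simp only [Equiv.Perm.mul_apply]
      rw [hIET.2.2.2.2 i _ hmem, hIET.2.2.2.2 i _ hi, h1]
      ring

private lemma noPeriodic (hs : 2 ≤ s) (hIET : IsIET s l r len π T)
    (hreg : IsRegularIET s l len T) :
    ∀ x ∈ Set.Ico l r, ∀ n : ℕ, 1 ≤ n → (T ^ n) x ≠ x := by
  intro x hx n hn hfix
  have h0 : 0 < s := by omega
  obtain ⟨i₀, hi₀, hTi₀⟩ := exists_i0 hs hIET hreg
  have lfix_contra : (T ^ n) l = l → False := by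
    intro hl
    have h1 : (T ^ (n + 1)) (sepPt l len i₀) = T (sepPt l len i₀) := by
      rw [pow_succ, Equiv.Perm.mul_apply, hTi₀, hl]
    have h2 : (T ^ n) (sepPt l len i₀) = sepPt l len i₀ :=
      T.injective (by rw [← Equiv.Perm.mul_apply, ← pow_succ']; exact h1)
    exact per_sep_contra hreg hi₀ hn h2
  set A := {y : ℝ | y ∈ Set.Icc l x ∧ ∀ z ∈ Set.Icc y x, (T ^ n) z = z} with hA
  have hxA : x ∈ A := by
    refine ⟨⟨hx.1, le_refl x⟩, fun z hz => ?_⟩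
    rw [le_antisymm hz.2 hz.1]
    exact hfix
  have hAne : A.Nonempty := ⟨x, hxA⟩
  have hbdd : BddBelow A := ⟨l, fun y hy => hy.1.1⟩
  set c := sInf A with hc
  have hcl : l ≤ c := le_csInf hAne (fun y hy => hy.1.1)
  have hcx : c ≤ x := csInf_le hbdd hxA
  have hzone : ∀ z, c < z → z ≤ x → (T ^ n) z = z := by
    intro z hcz hzx
    obtain ⟨y', hyA, hyz⟩ := exists_lt_of_csInf_lt hAne hcz
    exact hyA.2 z ⟨hyz.le, hzx⟩
  have hcIco : c ∈ Set.Ico l r := ⟨hcl, lt_of_le_of_lt hcx hx.2⟩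
  have hcfix : (T ^ n) c = c := by
    rcases eq_or_lt_of_le hcx with heq | hlt
    · rw [heq]; exact hfix
    · obtain ⟨ε, hε, hloc⟩ := T_right_local h0 hIET n c hcIco
      have hv1 : c < min (c + ε / 2) x := lt_min (by linarith) hlt
      have hv2 : min (c + ε / 2) x ≤ x := min_le_right _ _
      have hv3 : min (c + ε / 2) x < c + ε :=
        lt_of_le_of_lt (min_le_left _ _) (by linarith)
      have h1 := hloc _ ⟨hv1.le, hv3⟩
      rw [hzone _ hv1 hv2] at h1
      linarith
  by_cases hΓ : ∃ k, k < n ∧ ∃ i, (T ^ k) c = sepPt l len i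
  · obtain ⟨k, hkn, i, hki⟩ := hΓ
    have hfixi : (T ^ n) (sepPt l len i) = sepPt l len i := by
      rw [← hki, ← Equiv.Perm.mul_apply, ← pow_add, Nat.add_comm, pow_add,
        Equiv.Perm.mul_apply, hcfix]
    by_cases hiz : (i : ℕ) = 0
    · apply lfix_contra
      have hieq : sepPt l len i = l := by
        rw [show i = ⟨0, h0⟩ from Fin.ext hiz, sepPt_zero]
      rw [← hieq]
      exact hfixi
    · exact per_sep_contra hreg hiz hn hfixi
  · push_neg at hΓ
    obtain ⟨ε, hε, hloc⟩ := T_two_local h0 hIET n c hcIco (fun k hk i => hΓ k hk i)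
    rcases eq_or_lt_of_le hcl with hceq | hclt
    · exact lfix_contra (by rw [hceq]; exact hcfix)
    · have hy1 : max (c - ε / 2) ((l + c) / 2) < c :=
        max_lt (by linarith) (by linarith)
      have hy2 : c - ε < max (c - ε / 2) ((l + c) / 2) :=
        lt_of_lt_of_le (by linarith) (le_max_left _ _)
      have hy3 : l ≤ max (c - ε / 2) ((l + c) / 2) :=
        le_trans (by linarith) (le_max_right _ _)
      have hyA : max (c - ε / 2) ((l + c) / 2) ∈ A := by
        refine ⟨⟨hy3, le_trans hy1.le hcx⟩, ?_⟩
        intro z hz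
        rcases le_or_gt z c with hzc | hzc
        · have hmem : z ∈ Set.Ioo (c - ε) (c + ε) :=
            ⟨lt_of_lt_of_le hy2 hz.1, by linarith⟩
          have h1 := hloc z hmem
          rw [hcfix] at h1
          rw [h1]; ring
        · exact hzone z hzc hz.2
      have := csInf_le hbdd hyA
      linarith

private lemma rel_endgame (hs : 2 ≤ s) (hIET : IsIET s l r len π T)
    (hreg : IsRegularIET s l len T)
    {i₀ : Fin s} (hi₀ : (i₀ : ℕ) ≠ 0) (hTi₀ : T (sepPt l len i₀) = l)
    {i j : Fin s} {M : ℕ} (hM : 1 ≤ M)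
    (hrel : (T ^ M) (sepPt l len i) = sepPt l len j) :
    (j : ℕ) = 0 ∧ M = 1 := by
  have h0 : 0 < s := by omega
  have hinj := (sepPt_strictMono l hIET.2.1).injective
  by_cases hi : (i : ℕ) = 0
  · exfalso
    have hieq : sepPt l len i = l := by
      rw [show i = ⟨0, h0⟩ from Fin.ext hi, sepPt_zero]
    have hrel' : (T ^ M) l = sepPt l len j := by
      conv_lhs => rw [← hieq]
      exact hrel
    have h1 : (T ^ (M + 1)) (sepPt l len i₀) = sepPt l len j := by
      rw [pow_succ, Equiv.Perm.mul_apply, hTi₀, hrel']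
    by_cases hj : (j : ℕ) = 0
    · have hjeq : sepPt l len j = l := by
        rw [show j = ⟨0, h0⟩ from Fin.ext hj, sepPt_zero]
      have h2 : (T ^ (M + 1)) (sepPt l len i₀) = T (sepPt l len i₀) := by
        rw [h1, hjeq, hTi₀]
      have h3 : (T ^ M) (sepPt l len i₀) = sepPt l len i₀ :=
        T.injective (by rw [← Equiv.Perm.mul_apply, ← pow_succ']; exact h2)
      exact per_sep_contra hreg hi₀ hM h3
    · by_cases hij : i₀ = j
      · rw [hij] at h1
        exact per_sep_contra hreg hj (by omega) h1
      · exact disj_sep_contra hreg hi₀ hj hij h1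
  · by_cases hj : (j : ℕ) = 0
    · have hjeq : sepPt l len j = l := by
        rw [show j = ⟨0, h0⟩ from Fin.ext hj, sepPt_zero]
      have h1 : (T ^ M) (sepPt l len i) = T (sepPt l len i₀) := by
        rw [hrel, hjeq, hTi₀]
      obtain ⟨M', rfl⟩ : ∃ M', M = M' + 1 := ⟨M - 1, by omega⟩
      have h2 : (T ^ M') (sepPt l len i) = sepPt l len i₀ :=
        T.injective (by rw [← Equiv.Perm.mul_apply, ← pow_succ']; exact h1)
      rcases Nat.eq_zero_or_pos M' with hM' | hM'
      · subst hM'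
        exact ⟨hj, rfl⟩
      · exfalso
        by_cases hii : i = i₀
        · rw [hii] at h2
          exact per_sep_contra hreg hi₀ hM' h2
        · exact disj_sep_contra hreg hi hi₀ hii h2
    · exfalso
      by_cases hij : i = j
      · rw [hij] at hrel
        exact per_sep_contra hreg hj hM hrel
      · exact disj_sep_contra hreg hi hj hij hrel

private lemma combine_hits (hs : 2 ≤ s) (hIET : IsIET s l r len π T)
    (hreg : IsRegularIET s l len T)
    {i₀ : Fin s} (hi₀ : (i₀ : ℕ) ≠ 0) (hTi₀ : T (sepPt l len i₀) = l)
    {w : ℝ} (hwl : l < w)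
    {k : ℕ} {j : Fin s} (hkj : (T ^ k) w = sepPt l len j)
    {k' : ℕ} {i : Fin s} (hki : ((T⁻¹) ^ k') w = imgPt l len π i) : False := by
  have h0 : 0 < s := by omega
  have hinvk : (T ^ k')⁻¹ w = imgPt l len π i := by rw [← inv_pow]; exact hki
  have h1 : w = (T ^ k') (imgPt l len π i) := by
    conv_lhs => rw [← perm_apply_inv_self (T ^ k') w]
    rw [hinvk]
  have h2 : w = (T ^ (k' + 1)) (sepPt l len i) := by
    rw [h1, ← T_sep hIET, pow_succ, Equiv.Perm.mul_apply]
  have h3 : (T ^ (k + k' + 1)) (sepPt l len i) = sepPt l len j := by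
    rw [← hkj, h2, ← Equiv.Perm.mul_apply, ← pow_add, Nat.add_assoc]
  obtain ⟨hj0, hM1⟩ := rel_endgame hs hIET hreg hi₀ hTi₀
    (by omega : 1 ≤ k + k' + 1) h3
  have hk0 : k = 0 := by omega
  have hw2 : w = sepPt l len j := by
    rw [← hkj, hk0, pow_zero]
    rfl
  have hjl : sepPt l len j = l := by
    rw [show j = ⟨0, h0⟩ from Fin.ext hj0, sepPt_zero]
  rw [hjl] at hw2
  linarith

end KeaneT
/-- Keane. Every regular interval exchange transformation is minimal. -/
theorem regular_isMinimal (s : ℕ) (hs : 2 ≤ s) (l r : ℝ) (len : Fin s → ℝ)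
    (π : Equiv.Perm (Fin s)) (T : Equiv.Perm ℝ)
    (hIET : IsIET s l r len π T) (hreg : IsRegularIET s l len T) :
    IsMinimalOn T l r := by
  have h0 : 0 < s := by omega
  intro z₀ hz₀ y hy
  by_contra hyn
  set ORB := orbitZ T z₀ with hORBdef
  have horbself : z₀ ∈ ORB := ⟨0, by simp⟩
  have hfwd : ∀ o ∈ ORB, T o ∈ ORB := by
    rintro o ⟨n, rfl⟩
    exact ⟨1 + n, by rw [zpow_one_add, Equiv.Perm.mul_apply]⟩
  have hbwd : ∀ o ∈ ORB, T⁻¹ o ∈ ORB := by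
    rintro o ⟨n, rfl⟩
    exact ⟨(-1) + n, by rw [zpow_add, Equiv.Perm.mul_apply, zpow_neg_one]⟩
  have horbIco : ∀ o ∈ ORB, o ∈ Set.Ico l r := by
    rintro o ⟨n, rfl⟩
    induction n using Int.induction_on with
    | zero => simpa using hz₀
    | succ m ih =>
        rw [show (m : ℤ) + 1 = 1 + m from by ring, zpow_one_add, Equiv.Perm.mul_apply]
        exact T_mapsIco h0 hIET _ ih
    | pred m ih =>
        rw [show (-(m : ℤ)) - 1 = (-1) + (-(m : ℤ)) from by ring, zpow_add,
          Equiv.Perm.mul_apply, zpow_neg_one]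
        exact Tinv_mapsIco h0 hIET _ ih
  have hnp := noPeriodic hs hIET hreg
  obtain ⟨i₀, hi₀, hTi₀⟩ := exists_i0 hs hIET hreg
  have hcovT : ∀ w ∈ Set.Ico l r, ∃ i, w ∈ Set.Ico (sepPt l len i) (sepPt l len i + len i) :=
    fun w hw => sepPt_cover l r h0 hIET.2.1 hIET.2.2.1 hw
  have htrT : ∀ i : Fin s, ∀ z ∈ Set.Ico (sepPt l len i) (sepPt l len i + len i),
      T z = z + (T (sepPt l len i) - sepPt l len i) := by
    intro i z hz
    rw [T_sep hIET]
    exact hIET.2.2.2.2 i z hz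
  have hmapT := T_mapsIco h0 hIET
  have hcovI : ∀ w ∈ Set.Ico l r, ∃ i,
      w ∈ Set.Ico (imgPt l len π i) (imgPt l len π i + len i) :=
    fun w hw => img_cover h0 hIET.2.1 hIET.2.2.1 hw
  have htrI : ∀ i : Fin s, ∀ z ∈ Set.Ico (imgPt l len π i) (imgPt l len π i + len i),
      T⁻¹ z = z + (T⁻¹ (imgPt l len π i) - imgPt l len π i) := fun i => Tinv_img hIET i
  have hmapI := Tinv_mapsIco h0 hIET
  have hnpI : ∀ w ∈ Set.Ico l r, ∀ n : ℕ, 1 ≤ n → ((T⁻¹) ^ n) w ≠ w := by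
    intro w hw n hn hfx
    have h2 : (T ^ n)⁻¹ w = w := by rw [← inv_pow]; exact hfx
    have h3 := congrArg (⇑(T ^ n)) h2
    rw [perm_apply_inv_self] at h3
    exact hnp w hw n hn h3.symm
  have hbwd' : ∀ o ∈ ORB, (T⁻¹)⁻¹ o ∈ ORB := by
    intro o ho
    rw [inv_inv]
    exact hfwd o ho
  obtain ⟨ε, hε, hball⟩ : ∃ ε > 0, ∀ v, |v - y| < ε → v ∉ closure ORB := by
    have hop : IsOpen (closure ORB)ᶜ := isClosed_closure.isOpen_compl
    obtain ⟨ε, hε, hb⟩ := Metric.isOpen_iff.mp hop y hyn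
    exact ⟨ε, hε, fun v hv => hb (by simpa [Real.dist_eq] using hv)⟩
  set q : ℝ := min (y + ε / 2) ((y + r) / 2) with hqdef
  have hyq : y < q := lt_min (by linarith) (by have := hy.2; linarith)
  have hqr : q < r := lt_of_le_of_lt (min_le_right _ _) (by have := hy.2; linarith)
  have hfreeIcc : ∀ v ∈ Set.Icc y q, v ∉ closure ORB := by
    intro v hv
    apply hball
    have h1 : v ≤ y + ε / 2 := le_trans hv.2 (min_le_left _ _)
    rw [abs_lt]
    constructor
    · have := hv.1; linarith
    · linarith
  set S : Set ℝ := (closure ORB ∪ {r}) ∩ Set.Icc q r with hSdef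
  have hSne : S.Nonempty := ⟨r, Or.inr rfl, hqr.le, le_refl r⟩
  have hScl : IsClosed S :=
    ((isClosed_closure.union isClosed_singleton).inter isClosed_Icc)
  have hSbdd : BddBelow S := ⟨q, fun v hv => hv.2.1⟩
  set b := sInf S with hbdef
  have hbS : b ∈ S := hScl.csInf_mem hSne hSbdd
  have hbq : q ≤ b := hbS.2.1
  have hbr : b ≤ r := hbS.2.2
  have hgapb : Set.Ioo y b ∩ ORB = ∅ := by
    rw [Set.eq_empty_iff_forall_notMem]
    rintro o ⟨⟨ho1, ho2⟩, hoORB⟩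
    rcases le_or_gt o q with hoq | hoq
    · exact hfreeIcc o ⟨ho1.le, hoq⟩ (subset_closure hoORB)
    · have hoS : o ∈ S := ⟨Or.inl (subset_closure hoORB), hoq.le, (horbIco o hoORB).2.le⟩
      have h2 := csInf_le hSbdd hoS
      rw [← hbdef] at h2
      linarith
  rcases eq_or_lt_of_le hbr with hbeq | hblt
  · -- b = r : the orbit lies in [l, y]
    have hORBy : ∀ o ∈ ORB, o ≤ y := by
      intro o ho
      by_contra hgt
      push_neg at hgt
      have hor := horbIco o ho
      rcases le_or_gt o q with h1 | h1
      · exact hfreeIcc o ⟨hgt.le, h1⟩ (subset_closure ho)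
      · have hoS : o ∈ S := ⟨Or.inl (subset_closure ho), h1.le, hor.2.le⟩
        have h2 := csInf_le hSbdd hoS
        rw [← hbdef, hbeq] at h2
        linarith [hor.2]
    set S' : Set ℝ := closure ORB ∩ Set.Icc l y with hS'def
    have hz₀y : z₀ ≤ y := hORBy z₀ horbself
    have hS'ne : S'.Nonempty := ⟨z₀, subset_closure horbself, hz₀.1, hz₀y⟩
    have hS'cl : IsClosed S' := isClosed_closure.inter isClosed_Icc
    have hS'bdd : BddAbove S' := ⟨y, fun v hv => hv.2.2⟩
    set a := sSup S' with hadef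
    have haS' : a ∈ S' := hS'cl.csSup_mem hS'ne hS'bdd
    have hay : a ≤ y := haS'.2.2
    have hal : l ≤ a := haS'.2.1
    have haIco : a ∈ Set.Ico l r := ⟨hal, lt_of_le_of_lt hay hy.2⟩
    rcases eq_or_lt_of_le hal with haleq | halt
    · -- a = l : the orbit is {l}, contradicting no periodic points
      have hall : ∀ o ∈ ORB, o = l := by
        intro o ho
        have h1 : o ∈ S' := ⟨subset_closure ho, (horbIco o ho).1, hORBy o ho⟩
        have h2 := le_csSup hS'bdd h1
        rw [← hadef, ← haleq] at h2
        exact le_antisymm h2 (horbIco o ho).1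
      have h1 : z₀ = l := hall z₀ horbself
      have h2 : T z₀ = l := hall _ (hfwd z₀ horbself)
      have h3 : (T ^ 1) z₀ = z₀ := by rw [pow_one, h2, h1]
      exact hnp z₀ hz₀ 1 le_rfl h3
    · -- a > l : right gap (a, r) is orbit-free; run the two right walks
      have hgapa : Set.Ioo a (a + (r - a)) ∩ ORB = ∅ := by
        rw [show a + (r - a) = r from by ring, Set.eq_empty_iff_forall_notMem]
        rintro o ⟨⟨ho1, _⟩, hoORB⟩
        have h2 := hORBy o hoORB
        have hoS' : o ∈ S' := ⟨subset_closure hoORB, (horbIco o hoORB).1, h2⟩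
        have h3 := le_csSup hS'bdd hoS'
        rw [← hadef] at h3
        linarith
      have har : (0 : ℝ) < r - a := by
        have := haIco.2; linarith
      obtain ⟨k, j, hkj⟩ := walk_gapR T (sepPt l len) len l r hcovT htrT hmapT hnp
        ORB hfwd hbwd haS'.1 haIco har hgapa
      obtain ⟨k', i, hki⟩ := walk_gapR T⁻¹ (imgPt l len π) len l r hcovI htrI hmapI hnpI
        ORB hbwd hbwd' haS'.1 haIco har hgapa
      exact combine_hits hs hIET hreg hi₀ hTi₀ halt hkj hki
  · -- b < r : left gap (y, b) is orbit-free; run the two left walks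
    have hbcl : b ∈ closure ORB := by
      rcases hbS.1 with h | h
      · exact h
      · exfalso
        rw [Set.mem_singleton_iff] at h
        rw [h] at hblt
        exact lt_irrefl r hblt
    have hbl : l < b := by
      have := hy.1; linarith
    have hbIco : b ∈ Set.Ico l r := ⟨hbl.le, hblt⟩
    have hby : (0 : ℝ) < b - y := by linarith
    have hgapb' : Set.Ioo (b - (b - y)) b ∩ ORB = ∅ := by
      rw [show b - (b - y) = y from by ring]
      exact hgapb
    obtain ⟨k, j, hkj⟩ := walk_gapL T (sepPt l len) len l r hcovT htrT hmapT hnp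
      ORB hfwd hbwd hbcl hbIco hby hgapb'
    obtain ⟨k', i, hki⟩ := walk_gapL T⁻¹ (imgPt l len π) len l r hcovI htrI hmapI hnpI
      ORB hbwd hbwd' hbcl hbIco hby hgapb'
    exact combine_hits hs hIET hreg hi₀ hTi₀ hbl hkj hki

end
end

section
/- Let T be a regular s-interval exchange transformation on [ℓ,r) with separation points γ_1 = ℓ < γ_2 < ⋯ < γ_s and images J_i = T(I_i) with left endpoints δ_i. Then Z(T) = [ℓ, max(γ_s, δ_{π(s)})) is right admissible for T, and every right admissible semi-interval for T is contained in Z(T); i.e., Z(T) is the largest right admissible semi-interval for T. -/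
open Set MeasureTheory

noncomputable section

private lemma mySepPt_mono {s : ℕ} (l : ℝ) (len : Fin s → ℝ) (hlen : ∀ i, 0 < len i)
    {i j : Fin s} (hij : i ≤ j) : sepPt l len i ≤ sepPt l len j := by
  unfold sepPt
  apply add_le_add_right
  apply Finset.sum_le_sum_of_subset_of_nonneg
  · intro k hk
    simp only [Finset.mem_filter, Finset.mem_univ, true_and] at *
    exact lt_of_lt_of_le hk hij
  · exact fun k _ _ => (hlen k).le

private lemma myAux (s : ℕ) (hs : 2 ≤ s) (l r : ℝ) (len : Fin s → ℝ)
    (π : Equiv.Perm (Fin s)) (T : Equiv.Perm ℝ) (hIET : IsIET s l r len π T)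
    (m : Fin s) (hm : ∀ i, i ≤ m) :
    RightAdmissible s l r len T
      (max (sepPt l len m) (imgPt l len π (π.symm m))) ∧
    ∀ t : ℝ, RightAdmissible s l r len T t →
      t ≤ max (sepPt l len m) (imgPt l len π (π.symm m)) := by
  unfold IsIET at hIET
  obtain ⟨hlr, hlen, hsum, hout, hmap⟩ := hIET
  have hsep_le : ∀ i, sepPt l len i ≤ sepPt l len m :=
    fun i => mySepPt_mono l len hlen (hm i)
  have himg_le : ∀ i : Fin s, imgPt l len π i ≤ imgPt l len π (π.symm m) := by
    intro i
    unfold imgPt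
    apply add_le_add_right
    apply Finset.sum_le_sum_of_subset_of_nonneg
    · intro k hk
      simp only [Finset.mem_filter, Finset.mem_univ, true_and, Equiv.apply_symm_apply] at *
      exact lt_of_lt_of_le hk (hm (π i))
    · exact fun k _ _ => (hlen k).le
  have huniv1 : (Finset.univ : Finset (Fin s))
      = insert m (Finset.univ.filter (fun j => j < m)) := by
    ext k
    simp only [Finset.mem_univ, Finset.mem_insert, Finset.mem_filter, true_and, true_iff]
    rcases (hm k).lt_or_eq with h | h
    · exact Or.inr h
    · exact Or.inl h
  have huniv2 : (Finset.univ : Finset (Fin s))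
      = insert (π.symm m) (Finset.univ.filter (fun j => π j < π (π.symm m))) := by
    ext k
    simp only [Finset.mem_univ, Finset.mem_insert, Finset.mem_filter, true_and, true_iff,
      Equiv.apply_symm_apply]
    rcases eq_or_ne k (π.symm m) with h | h
    · exact Or.inl h
    · right
      rcases (hm (π k)).lt_or_eq with h2 | h2
      · exact h2
      · exact absurd (by rw [← h2, Equiv.symm_apply_apply]) h
  have hsum_a : sepPt l len m + len m = r := by
    have h1 : ∑ i, len i = len m + ∑ j ∈ Finset.univ.filter (fun j => j < m), len j := by
      conv_lhs => rw [huniv1]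
      rw [Finset.sum_insert (by simp)]
    unfold sepPt
    linarith
  have hsum_b : imgPt l len π (π.symm m) + len (π.symm m) = r := by
    have h1 : ∑ i, len i = len (π.symm m)
        + ∑ j ∈ Finset.univ.filter (fun j => π j < π (π.symm m)), len j := by
      conv_lhs => rw [huniv2]
      rw [Finset.sum_insert (by simp)]
    unfold imgPt
    linarith
  have hl_a : l < sepPt l len m := by
    have h0 : (⟨0, by omega⟩ : Fin s) < m := by
      have h01 : (⟨0, by omega⟩ : Fin s) < (⟨1, by omega⟩ : Fin s) := by
        simp [Fin.lt_def]
      exact lt_of_lt_of_le h01 (hm _)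
    have hpos : 0 < ∑ j ∈ Finset.univ.filter (fun j => j < m), len j :=
      Finset.sum_pos (fun i _ => hlen i) ⟨⟨0, by omega⟩, by simp [h0]⟩
    unfold sepPt
    linarith
  constructor
  · unfold RightAdmissible
    refine ⟨lt_of_lt_of_le hl_a (le_max_left _ _),
      max_lt (by linarith [hlen m]) (by linarith [hlen (π.symm m)]), ?_⟩
    rcases le_total (imgPt l len π (π.symm m)) (sepPt l len m) with hba | hab
    · refine ⟨m, 0, ?_, ?_, ?_⟩
      · rw [max_eq_left hba]
        simp
      · intro h0; omega
      · intro _ h hk1 hk2; omega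
    · have hT : T (sepPt l len (π.symm m)) = imgPt l len π (π.symm m) := by
        rw [hmap (π.symm m) _ ⟨le_rfl, lt_add_of_pos_right _ (hlen (π.symm m))⟩]
        ring
      refine ⟨π.symm m, 1, ?_, ?_, ?_⟩
      · rw [max_eq_right hab, zpow_one, hT]
      · intro _ h h1 h2; omega
      · intro h; omega
  · intro t ht
    unfold RightAdmissible at ht
    obtain ⟨hlt, htr, i, k, heq, hpos, hneg⟩ := ht
    by_contra hcon
    push_neg at hcon
    have hzero : (T ^ (0 : ℤ)) (sepPt l len i) = sepPt l len i := by simp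
    have hmaxa := le_max_left (sepPt l len m) (imgPt l len π (π.symm m))
    have hmaxb := le_max_right (sepPt l len m) (imgPt l len π (π.symm m))
    rcases lt_trichotomy k 0 with hk | hk | hk
    · have h0 := hneg hk.le 0 hk le_rfl
      rw [hzero] at h0
      linarith [hsep_le i]
    · rw [hk, hzero] at heq
      linarith [hsep_le i]
    · have hT1 : (T ^ (1 : ℤ)) (sepPt l len i) = imgPt l len π i := by
        rw [zpow_one, hmap i _ ⟨le_rfl, lt_add_of_pos_right _ (hlen i)⟩]
        ring
      have hw : t ≤ imgPt l len π i := by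
        rcases eq_or_lt_of_le (show (1 : ℤ) ≤ k by omega) with h1 | h1
        · rw [← h1, hT1] at heq
          exact heq.le
        · have := hpos hk 1 one_pos h1
          rw [hT1] at this
          exact this.le
      linarith [himg_le i]

/-- `Z(T) = [l, max (γ_s, δ_{π(s)}))` is the largest right
admissible semi-interval for a regular `s`-interval exchange transformation `T`. -/
theorem zPoint_rightAdmissible_largest (s : ℕ) (hs : 2 ≤ s) (l r : ℝ)
    (len : Fin s → ℝ) (π : Equiv.Perm (Fin s)) (T : Equiv.Perm ℝ)
    (hIET : IsIET s l r len π T) (hreg : IsRegularIET s l len T) :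
    RightAdmissible s l r len T
      (max (sepPt l len ⟨s - 1, by omega⟩) (imgPt l len π (π.symm ⟨s - 1, by omega⟩))) ∧
    ∀ t : ℝ, RightAdmissible s l r len T t →
      t ≤ max (sepPt l len ⟨s - 1, by omega⟩) (imgPt l len π (π.symm ⟨s - 1, by omega⟩)) := by
  exact myAux s hs l r len π T hIET ⟨s - 1, by omega⟩
    (fun i => by simp only [Fin.le_def]; omega)

end
end

section
/- Let T be an interval exchange transformation on [ℓ,r) defined over ℤ[√d]. There exists a constant c > 0 such that for every integer n ≠ 0 and every z ∈ [ℓ,r), either T^n(z) = z or |T^n(z) − z| > c/|n|. -/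
open Set MeasureTheory

noncomputable section

-- ====== auxiliary lemmas ======

lemma my_gap (d : ℤ) (hd : 2 ≤ d) (hirr : Irrational (Real.sqrt d)) (N : ℕ) (hN : 1 ≤ N)
    (p q : ℤ) (hp : p.natAbs ≤ N) (hq : q.natAbs ≤ N)
    (hx : (p : ℝ) + q * Real.sqrt d ≠ 0) :
    1 / (N * (1 + Real.sqrt d)) ≤ |(p : ℝ) + q * Real.sqrt d| := by
  have hd0 : (0:ℝ) ≤ (d:ℝ) := by exact_mod_cast (by omega : (0:ℤ) ≤ d)
  have hs : Real.sqrt d ^ 2 = d := Real.sq_sqrt hd0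
  have hs0 : 0 ≤ Real.sqrt d := Real.sqrt_nonneg _
  have hnz : p ^ 2 - d * q ^ 2 ≠ 0 := by
    intro h
    rcases eq_or_ne q 0 with hq0 | hq0
    · subst hq0
      have hp0 : p = 0 := by nlinarith [sq_nonneg p]
      simp [hp0] at hx
    · apply hirr
      refine ⟨(p.natAbs : ℚ) / (q.natAbs : ℚ), ?_⟩
      have h1 : (p:ℝ)^2 = (d:ℝ) * (q:ℝ)^2 := by
        exact_mod_cast congrArg (fun t : ℤ => (t:ℝ)) (by linarith : p^2 = d*q^2)
      have hqne : |(q:ℝ)| ≠ 0 := abs_ne_zero.mpr (Int.cast_ne_zero.mpr hq0)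
      have key : |(p:ℝ)| = Real.sqrt d * |(q:ℝ)| := by
        rw [← Real.sqrt_sq_eq_abs, ← Real.sqrt_sq_eq_abs (x := (q:ℝ)), h1,
          Real.sqrt_mul hd0]
      have : ((p.natAbs : ℚ) / (q.natAbs : ℚ) : ℚ) = ((|(p:ℝ)| / |(q:ℝ)|) : ℝ) := by
        push_cast [Nat.cast_natAbs]
        norm_num
      rw [this, key]
      field_simp
  have h1 : (1:ℝ) ≤ |(p:ℝ)^2 - d * (q:ℝ)^2| := by
    have h2 : (1:ℝ) ≤ |((p^2 - d*q^2 : ℤ) : ℝ)| := by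
      exact_mod_cast Int.one_le_abs hnz
    convert h2 using 2
    push_cast
    ring
  have hprod : |(p:ℝ) + q * Real.sqrt d| * |(p:ℝ) - q * Real.sqrt d|
      = |(p:ℝ)^2 - d * (q:ℝ)^2| := by
    rw [← abs_mul]
    congr 1
    linear_combination (-(q:ℝ)^2) * hs
  have hpN : |(p:ℝ)| ≤ (N:ℝ) := by
    rw [← Int.cast_abs, Int.abs_eq_natAbs]
    exact_mod_cast hp
  have hqN : |(q:ℝ)| ≤ (N:ℝ) := by
    rw [← Int.cast_abs, Int.abs_eq_natAbs]
    exact_mod_cast hq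
  have hy : |(p:ℝ) - q * Real.sqrt d| ≤ (N:ℝ) * (1 + Real.sqrt d) := by
    calc |(p:ℝ) - q * Real.sqrt d| ≤ |(p:ℝ)| + |(q:ℝ) * Real.sqrt d| := abs_sub _ _
      _ = |(p:ℝ)| + |(q:ℝ)| * Real.sqrt d := by
          rw [abs_mul, abs_of_nonneg hs0]
      _ ≤ (N:ℝ) + (N:ℝ) * Real.sqrt d := by nlinarith
      _ = (N:ℝ) * (1 + Real.sqrt d) := by ring
  have hN1 : (1:ℝ) ≤ (N:ℝ) := by exact_mod_cast hN
  have hB : 0 < (N:ℝ) * (1 + Real.sqrt d) := by nlinarith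
  rw [div_le_iff₀ hB]
  nlinarith [abs_nonneg ((p:ℝ) + q * Real.sqrt d),
    abs_nonneg ((p:ℝ) - q * Real.sqrt d),
    mul_nonneg (abs_nonneg ((p:ℝ) + q * Real.sqrt d))
      (sub_nonneg.mpr hy)]

section IETfacts

variable {s : ℕ} {l r : ℝ} {len : Fin s → ℝ} {π : Equiv.Perm (Fin s)} {T : Equiv.Perm ℝ}

lemma my_exists_piece (hIET : IsIET s l r len π T) {z : ℝ} (hz : z ∈ Set.Ico l r) :
    ∃ i : Fin s, z ∈ Set.Ico (sepPt l len i) (sepPt l len i + len i) := by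
  classical
  obtain ⟨hlr, hpos, hsum, hout, happ⟩ := hIET
  have hs : 0 < s := by
    rcases Nat.eq_zero_or_pos s with h | h
    · subst h; simp at hsum; linarith
    · exact h
  set S := Finset.univ.filter (fun i : Fin s => sepPt l len i ≤ z) with hS
  have h0 : (⟨0, hs⟩ : Fin s) ∈ S := by
    have hemptyset : Finset.univ.filter (fun j : Fin s => j < (⟨0, hs⟩ : Fin s)) = ∅ := by
      apply Finset.filter_eq_empty_iff.mpr
      intro j _
      simp [Fin.lt_def]
    have hsep0 : sepPt l len ⟨0, hs⟩ = l := by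
      unfold sepPt; rw [hemptyset]; simp
    rw [hS]
    exact Finset.mem_filter.mpr ⟨Finset.mem_univ _, by rw [hsep0]; exact hz.1⟩
  have hSne : S.Nonempty := ⟨_, h0⟩
  set i := S.max' hSne with hi
  have hiS : i ∈ S := S.max'_mem hSne
  have hle : sepPt l len i ≤ z := by
    rw [hS] at hiS
    exact (Finset.mem_filter.mp hiS).2
  refine ⟨i, hle, ?_⟩
  by_cases h : (i : ℕ) + 1 < s
  · have hstep : sepPt l len ⟨(i : ℕ) + 1, h⟩ = sepPt l len i + len i := by
      unfold sepPt
      have hins : Finset.univ.filter (fun j : Fin s => j < (⟨(i : ℕ) + 1, h⟩ : Fin s)) =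
          insert i (Finset.univ.filter (fun j : Fin s => j < i)) := by
        ext j
        simp only [Finset.mem_filter, Finset.mem_univ, true_and, Finset.mem_insert,
          Fin.lt_def, Fin.ext_iff]
        omega
      rw [hins, Finset.sum_insert (by simp only [Finset.mem_filter, Finset.mem_univ, true_and]; exact lt_irrefl i)]
      ring
    have hnot : (⟨(i : ℕ) + 1, h⟩ : Fin s) ∉ S := by
      intro hmem
      have hle' := S.le_max' _ hmem
      rw [← hi] at hle'
      have : (i : ℕ) + 1 ≤ (i : ℕ) := hle'
      omega
    have hlt : ¬ sepPt l len ⟨(i : ℕ) + 1, h⟩ ≤ z := by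
      rw [hS] at hnot
      intro hc
      exact hnot (Finset.mem_filter.mpr ⟨Finset.mem_univ _, hc⟩)
    push_neg at hlt
    rw [hstep] at hlt
    exact hlt
  · have hlast : (i : ℕ) + 1 = s := by
      have := i.isLt; omega
    have hr : sepPt l len i + len i = r := by
      unfold sepPt
      have herase : Finset.univ.filter (fun j : Fin s => j < i) =
          Finset.univ.erase i := by
        ext j
        have hj := j.isLt
        simp only [Finset.mem_filter, Finset.mem_univ, true_and, Finset.mem_erase,
          and_true, Fin.lt_def, ne_eq, Fin.ext_iff]
        omega
      rw [herase, add_assoc, Finset.sum_erase_add Finset.univ len (Finset.mem_univ i),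
        hsum]
      ring
    rw [hr]
    exact hz.2

lemma my_maps (hIET : IsIET s l r len π T) {z : ℝ} (hz : z ∈ Set.Ico l r) :
    T z ∈ Set.Ico l r := by
  by_contra h
  have h1 := hIET.2.2.2.1 _ h
  have h2 := T.injective h1
  rw [h2] at h
  exact h hz

lemma my_maps_inv (hIET : IsIET s l r len π T) {z : ℝ} (hz : z ∈ Set.Ico l r) :
    T⁻¹ z ∈ Set.Ico l r := by
  by_contra h
  have h1 := hIET.2.2.2.1 _ h
  rw [← Equiv.Perm.mul_apply, mul_inv_cancel, Equiv.Perm.one_apply] at h1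
  rw [← h1] at h
  exact h hz

lemma my_step (hIET : IsIET s l r len π T) {z : ℝ} (hz : z ∈ Set.Ico l r) :
    ∃ i : Fin s, T z - z = imgPt l len π i - sepPt l len i := by
  obtain ⟨i, hi⟩ := my_exists_piece hIET hz
  exact ⟨i, by rw [hIET.2.2.2.2 i z hi]; ring⟩

end IETfacts


/-- For an interval exchange transformation defined over `ℤ[√d]`
there is `c > 0` such that for every `n ≠ 0` and `z ∈ [l,r)`, either `T^n z = z`
or `|T^n z - z| > c / |n|`. -/
theorem exists_recurrence_gap (d : ℤ) (hd : 2 ≤ d) (hsf : Squarefree d)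
    (s : ℕ) (l r : ℝ) (len : Fin s → ℝ) (π : Equiv.Perm (Fin s)) (T : Equiv.Perm ℝ)
    (hIET : IsIET s l r len π T) (hdef : DefinedOverZ d s l r len π) :
    ∃ c : ℝ, 0 < c ∧ ∀ n : ℤ, n ≠ 0 → ∀ z ∈ Set.Ico l r,
      (T ^ n) z = z ∨ |(T ^ n) z - z| > c / |(n : ℝ)| := by
  classical
  have hirr : Irrational (Real.sqrt d) := by
    rw [irrational_sqrt_intCast_iff_of_nonneg (by omega)]
    rintro ⟨k, hk⟩
    have hu := hsf k (hk ▸ dvd_refl d)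
    rcases Int.isUnit_iff.mp hu with h1 | h1 <;> (subst h1; simp at hk; omega)
  choose mfun nfun hrep using fun i => (hdef.2.2 i).2
  set M : ℕ := (Finset.univ.sup fun i : Fin s => max (mfun i).natAbs (nfun i).natAbs) + 1
    with hM
  have hM1 : 1 ≤ M := Nat.le_add_left 1 _
  have hMm : ∀ i, (mfun i).natAbs ≤ M := by
    intro i
    have h1 : (mfun i).natAbs ≤
        Finset.univ.sup fun j : Fin s => max (mfun j).natAbs (nfun j).natAbs :=
      le_trans (le_max_left _ _) (Finset.le_sup (f := fun j : Fin s => max (mfun j).natAbs (nfun j).natAbs) (Finset.mem_univ i))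
    omega
  have hMn : ∀ i, (nfun i).natAbs ≤ M := by
    intro i
    have h1 : (nfun i).natAbs ≤
        Finset.univ.sup fun j : Fin s => max (mfun j).natAbs (nfun j).natAbs :=
      le_trans (le_max_right _ _) (Finset.le_sup (f := fun j : Fin s => max (mfun j).natAbs (nfun j).natAbs) (Finset.mem_univ i))
    omega
  have fwd : ∀ k : ℕ, ∀ z ∈ Set.Ico l r, (T ^ k) z ∈ Set.Ico l r ∧
      ∃ p q : ℤ, (T ^ k) z - z = (p : ℝ) + (q : ℝ) * Real.sqrt d ∧
        p.natAbs ≤ k * M ∧ q.natAbs ≤ k * M := by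
    intro k
    induction k with
    | zero => intro z hz; exact ⟨by simpa using hz, 0, 0, by simp, by simp, by simp⟩
    | succ k ih =>
      intro z hz
      obtain ⟨hmem, p, q, hpq, hp, hq⟩ := ih z hz
      obtain ⟨i, hi⟩ := my_step hIET hmem
      have happ : (T ^ (k + 1)) z = T ((T ^ k) z) := by
        rw [pow_succ']; rfl
      refine ⟨by rw [happ]; exact my_maps hIET hmem, p + mfun i, q + nfun i, ?_, ?_, ?_⟩
      · have hsplit : (T ^ (k+1)) z - z
            = (T ((T ^ k) z) - (T ^ k) z) + ((T ^ k) z - z) := by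
          rw [happ]; ring
        rw [hsplit, hi, hrep i, hpq]
        push_cast
        ring
      · calc (p + mfun i).natAbs ≤ p.natAbs + (mfun i).natAbs := Int.natAbs_add_le _ _
          _ ≤ k * M + M := add_le_add hp (hMm i)
          _ = (k + 1) * M := by ring
      · calc (q + nfun i).natAbs ≤ q.natAbs + (nfun i).natAbs := Int.natAbs_add_le _ _
          _ ≤ k * M + M := add_le_add hq (hMn i)
          _ = (k + 1) * M := by ring
  have bwd : ∀ k : ℕ, ∀ z ∈ Set.Ico l r, (T⁻¹ ^ k) z ∈ Set.Ico l r ∧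
      ∃ p q : ℤ, (T⁻¹ ^ k) z - z = (p : ℝ) + (q : ℝ) * Real.sqrt d ∧
        p.natAbs ≤ k * M ∧ q.natAbs ≤ k * M := by
    intro k
    induction k with
    | zero => intro z hz; exact ⟨by simpa using hz, 0, 0, by simp, by simp, by simp⟩
    | succ k ih =>
      intro z hz
      obtain ⟨hmem, p, q, hpq, hp, hq⟩ := ih z hz
      have hmem' : T⁻¹ ((T⁻¹ ^ k) z) ∈ Set.Ico l r := my_maps_inv hIET hmem
      obtain ⟨i, hi⟩ := my_step hIET hmem'
      rw [← Equiv.Perm.mul_apply, mul_inv_cancel, Equiv.Perm.one_apply] at hi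
      have happ : (T⁻¹ ^ (k + 1)) z = T⁻¹ ((T⁻¹ ^ k) z) := by
        rw [pow_succ']; rfl
      refine ⟨by rw [happ]; exact hmem', p - mfun i, q - nfun i, ?_, ?_, ?_⟩
      · have hsplit : (T⁻¹ ^ (k+1)) z - z
            = ((T⁻¹ ^ k) z - z) - ((T⁻¹ ^ k) z - T⁻¹ ((T⁻¹ ^ k) z)) := by
          rw [happ]; ring
        rw [hsplit, hi, hrep i, hpq]
        push_cast
        ring
      · calc (p - mfun i).natAbs ≤ p.natAbs + (mfun i).natAbs := Int.natAbs_sub_le _ _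
          _ ≤ k * M + M := add_le_add hp (hMm i)
          _ = (k + 1) * M := by ring
      · calc (q - nfun i).natAbs ≤ q.natAbs + (nfun i).natAbs := Int.natAbs_sub_le _ _
          _ ≤ k * M + M := add_le_add hq (hMn i)
          _ = (k + 1) * M := by ring
  have hs0 : 0 ≤ Real.sqrt d := Real.sqrt_nonneg _
  have hMR : (1:ℝ) ≤ (M:ℝ) := by exact_mod_cast hM1
  refine ⟨1 / (2 * M * (1 + Real.sqrt d)), by positivity, ?_⟩
  intro n hn z hz
  -- reduce to a natural power (forward or backward)
  obtain ⟨k, hk1, p, q, hpq, hp, hq⟩ :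
      ∃ k : ℕ, 1 ≤ k ∧ ∃ p q : ℤ,
        ((T ^ n) z - z = (p : ℝ) + (q : ℝ) * Real.sqrt d ∧ |(n : ℝ)| = (k : ℝ)) ∧
        p.natAbs ≤ k * M ∧ q.natAbs ≤ k * M := by
    rcases lt_or_gt_of_ne hn with hneg | hpos
    · set k := (-n).toNat with hkdef
      have hk : (k : ℤ) = -n := Int.toNat_of_nonneg (by omega)
      have hTn : (T ^ n) z = (T⁻¹ ^ k) z := by
        rw [show n = -(k:ℤ) by omega, zpow_neg, zpow_natCast, ← inv_pow]
      obtain ⟨_, p, q, hpq, hp, hq⟩ := bwd k z hz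
      refine ⟨k, by omega, p, q, ⟨by rw [hTn]; exact hpq, ?_⟩, hp, hq⟩
      rw [abs_of_neg (by exact_mod_cast hneg : (n:ℝ) < 0)]
      exact_mod_cast hk.symm
    · set k := n.toNat with hkdef
      have hk : (k : ℤ) = n := Int.toNat_of_nonneg (by omega)
      have hTn : (T ^ n) z = (T ^ k) z := by
        rw [← hk, zpow_natCast]
      obtain ⟨_, p, q, hpq, hp, hq⟩ := fwd k z hz
      refine ⟨k, by omega, p, q, ⟨by rw [hTn]; exact hpq, ?_⟩, hp, hq⟩
      rw [abs_of_pos (by exact_mod_cast hpos : (0:ℝ) < (n:ℝ))]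
      exact_mod_cast hk.symm
  obtain ⟨hpq, habs⟩ := hpq
  by_cases h0 : (T ^ n) z = z
  · exact Or.inl h0
  right
  have hx : (p : ℝ) + (q : ℝ) * Real.sqrt d ≠ 0 := by
    rw [← hpq]
    exact sub_ne_zero.mpr h0
  have hkM1 : 1 ≤ k * M := Nat.one_le_iff_ne_zero.mpr (by positivity)
  have hgap := my_gap d hd hirr (k * M) hkM1 p q hp hq hx
  have hcast : ((k * M : ℕ) : ℝ) = (k : ℝ) * (M : ℝ) := by push_cast; ring
  rw [hcast] at hgap
  rw [hpq, habs]
  have hkR : (1:ℝ) ≤ (k:ℝ) := by exact_mod_cast hk1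
  have hpos1 : (0:ℝ) < (k:ℝ) * (M:ℝ) * (1 + Real.sqrt d) := by nlinarith
  have h2 : 1 / (2 * (M:ℝ) * (1 + Real.sqrt d)) / (k:ℝ)
      < 1 / ((k:ℝ) * (M:ℝ) * (1 + Real.sqrt d)) := by
    rw [div_div]
    apply div_lt_div_of_pos_left one_pos hpos1
    nlinarith
  calc 1 / (2 * (M:ℝ) * (1 + Real.sqrt d)) / (k:ℝ)
      < 1 / ((k:ℝ) * (M:ℝ) * (1 + Real.sqrt d)) := h2
    _ ≤ |(p : ℝ) + (q : ℝ) * Real.sqrt d| := hgap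

end
end
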